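/- arXiv:1106.0811 — 5 statements merged into one kernel-verified Lean document; each statement's English description precedes it below -/
import Mathlib

section
/- Let n ≥ 1 be an integer. For any vector z ∈ ℝⁿ with non-negative coordinates, there exists a non-zero vector δ ∈ {0,1}ⁿ such that ⟨z, δ⟩ ≥ (1/√(8·(log ρ(z) + 1)))·‖z‖·‖δ‖. -/
open scoped RealInnerProductSpace

-- `rho d = ρ(d)` for a finite sequence `d` with non-negative terms: with `d₁ ≥ … ≥ dₙ`
-- the non-increasing rearrangement of `d` and `k` the smallest index (1-based) with
-- `d₁² + … + d_k² ≥ d_{k+1}² + … + dₙ²`, `ρ(d) = d₁ / d_k` if `d_k ≠ 0`, else `ρ(d) = 1`.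
open Classical in
noncomputable def rho {n : ℕ} (d : Fin n → ℝ) : ℝ :=
  if hn : 0 < n then
    -- `s` is the non-increasing rearrangement of `d`
    let s : Fin n → ℝ := fun i => d (Tuple.sort d i.rev)
    -- `k` is the smallest (0-based) index with `s 0 ^ 2 + … + s k ^ 2 ≥` the remaining sum
    let k : Fin n := ⟨min (sInf {k : ℕ |
        ∑ i : Fin n, (if k < (i : ℕ) then s i ^ 2 else 0) ≤
        ∑ i : Fin n, (if (i : ℕ) ≤ k then s i ^ 2 else 0)}) (n - 1),
      lt_of_le_of_lt (min_le_right _ _) (Nat.sub_lt hn one_pos)⟩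
    if s k ≠ 0 then s ⟨0, hn⟩ / s k else 1
  else 1

lemma log_step {M : ℕ} (hM : 1 ≤ M) : 1/((M:ℝ)+1) ≤ Real.log (M+1) - Real.log M := by
  have hM0 : (0:ℝ) < M := by exact_mod_cast hM
  have h1 : (0:ℝ) < (M:ℝ)+1 := by linarith
  have := Real.log_le_sub_one_of_pos (x := (M:ℝ)/((M:ℝ)+1)) (by positivity)
  rw [Real.log_div (by positivity) (by positivity)] at this
  have h2 : (M:ℝ)/((M:ℝ)+1) - 1 = -(1/((M:ℝ)+1)) := by field_simp; ring
  linarith [this, h2 ▸ this]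

lemma log_tel {a M : ℕ} (ha : 1 ≤ a) (h : a ≤ M) :
    ∑ m ∈ Finset.Ioc a M, (1/(m:ℝ)) ≤ Real.log M - Real.log a := by
  induction M with
  | zero => omega
  | succ M ih =>
    rcases Nat.lt_or_ge a (M+1) with hlt | hge
    · have haM : a ≤ M := by omega
      have hstep := log_step (le_trans ha haM)
      have := ih haM
      rw [Finset.sum_Ioc_succ_top (by omega)]
      push_cast
      push_cast at this hstep
      linarith
    · have : a = M + 1 := by omega
      subst this
      simp

lemma hsq_aux (t : ℕ → ℝ) (K : ℕ) (B : ℝ)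
    (hmono : ∀ i j, i ≤ j → j ≤ K → t j ≤ t i)
    (h0 : ∀ i, i ≤ K → 0 ≤ t i)
    (hlt : ∀ j, j ≤ K → ∑ i ∈ Finset.range (j+1), t i < B * Real.sqrt (j+1)) :
    ∀ j, j ≤ K → t j ^ 2 * (j+1) ≤ B^2 := by
  intro j hj
  have hle : t j * (j+1) ≤ ∑ i ∈ Finset.range (j+1), t i := by
    have : ∑ i ∈ Finset.range (j+1), t j ≤ ∑ i ∈ Finset.range (j+1), t i := by
      apply Finset.sum_le_sum
      intro i hi
      exact hmono i j (Nat.lt_succ_iff.mp (Finset.mem_range.mp hi)) hj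
    simpa [Finset.sum_const, mul_comm] using this
  have h1 : t j * ((j:ℝ)+1) < B * Real.sqrt ((j:ℝ)+1) := by
    have := hlt j hj
    push_cast at this ⊢
    linarith
  have hnn : 0 ≤ t j * ((j:ℝ)+1) := by
    have := h0 j hj
    positivity
  have h2 : (t j * ((j:ℝ)+1))^2 < B^2 * ((j:ℝ)+1) := by
    calc (t j * ((j:ℝ)+1))^2 < (B * Real.sqrt ((j:ℝ)+1))^2 := by
          exact pow_lt_pow_left₀ h1 hnn two_ne_zero
      _ = B^2 * ((j:ℝ)+1) := by
          rw [mul_pow, Real.sq_sqrt (by positivity)]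
  have hj1 : (0:ℝ) < (j:ℝ)+1 := by positivity
  nlinarith [h2]

open Finset in
lemma lemA (t : ℕ → ℝ) (K : ℕ) (B : ℝ) (hB : 0 < B)
    (hmono : ∀ i j, i ≤ j → j ≤ K → t j ≤ t i)
    (h0 : ∀ i, i ≤ K → 0 ≤ t i)
    (hK : 0 < t K)
    (hlt : ∀ j, j ≤ K → ∑ i ∈ Finset.range (j+1), t i < B * Real.sqrt (j+1)) :
    ∑ i ∈ Finset.range (K+1), t i ^ 2 ≤ B^2 * (2 + 2 * Real.log (t 0 / t K)) := by
  have ht0 : 0 < t 0 := lt_of_lt_of_le hK (hmono 0 K (Nat.zero_le _) le_rfl)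
  have hsq := hsq_aux t K B hmono h0 hlt
  set x : ℝ := B^2 / t 0 ^2 with hx
  have hx1 : 1 ≤ x := by
    have := hsq 0 (Nat.zero_le _)
    rw [hx, le_div_iff₀ (by positivity)]
    push_cast at this
    linarith
  set a : ℕ := max 1 (Nat.floor x) with ha
  have ha1 : 1 ≤ a := le_max_left _ _
  have hax : (a:ℝ) ≤ x := by
    rw [ha]
    push_cast
    exact max_le hx1 (Nat.floor_le (by linarith))
  have hax2 : x/2 ≤ (a:ℝ) := by
    rcases le_or_gt x 2 with h | h
    · have : (1:ℝ) ≤ (a:ℝ) := by exact_mod_cast ha1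
      linarith
    · have h1 : x - 1 < (Nat.floor x : ℝ) := Nat.sub_one_lt_floor x
      have h2 : (Nat.floor x : ℝ) ≤ (a:ℝ) := by exact_mod_cast le_max_right 1 (Nat.floor x)
      linarith
  set a' : ℕ := min (K+1) a with ha'
  have ha'le : a' ≤ K + 1 := min_le_left _ _
  have split := Finset.sum_range_add_sum_Ico (fun i => t i ^ 2) ha'le
  -- first part
  have hfirst : ∑ i ∈ Finset.range a', t i ^ 2 ≤ B^2 := by
    calc ∑ i ∈ Finset.range a', t i ^ 2 ≤ ∑ i ∈ Finset.range a', t 0 ^ 2 := by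
          apply Finset.sum_le_sum
          intro i hi
          have hiK : i ≤ K := by
            have := Finset.mem_range.mp hi; omega
          exact pow_le_pow_left₀ (h0 i hiK) (hmono 0 i (Nat.zero_le _) hiK) 2
      _ = a' * t 0 ^2 := by rw [Finset.sum_const]; push_cast [Finset.card_range]; ring
      _ ≤ a * t 0 ^2 := by
          have : (a':ℝ) ≤ (a:ℝ) := by exact_mod_cast min_le_right (K+1) a
          nlinarith [sq_nonneg (t 0)]
      _ ≤ x * t 0 ^2 := by nlinarith [sq_nonneg (t 0)]
      _ = B^2 := by rw [hx]; field_simp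
  -- second part
  have hsecond : ∑ i ∈ Finset.Ico a' (K+1), t i ^ 2 ≤
      B^2 * (Real.log (K+1) - Real.log a') := by
    have step1 : ∑ i ∈ Finset.Ico a' (K+1), t i ^ 2 ≤
        ∑ i ∈ Finset.Ico a' (K+1), B^2 * (1/((i:ℝ)+1)) := by
      apply Finset.sum_le_sum
      intro i hi
      have hiK : i ≤ K := by have := (Finset.mem_Ico.mp hi).2; omega
      have := hsq i hiK
      have hi1 : (0:ℝ) < (i:ℝ)+1 := by positivity
      rw [mul_one_div, le_div_iff₀ hi1]
      linarith
    have step2 : ∑ i ∈ Finset.Ico a' (K+1), (1/((i:ℝ)+1)) =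
        ∑ m ∈ Finset.Ioc a' (K+1), (1/(m:ℝ)) := by
      refine Finset.sum_nbij' (fun i => i + 1) (fun m => m - 1) ?_ ?_ ?_ ?_ ?_
      · intro i hi; simp only [Finset.mem_Ico] at hi; simp only [Finset.mem_Ioc]; omega
      · intro m hm; simp only [Finset.mem_Ioc] at hm; simp only [Finset.mem_Ico]; omega
      · intro i hi; show i + 1 - 1 = i; omega
      · intro m hm; simp only [Finset.mem_Ioc] at hm; show m - 1 + 1 = m; omega
      · intro i hi; push_cast; ring
    have step3 : ∑ m ∈ Finset.Ioc a' (K+1), (1/(m:ℝ)) ≤ Real.log (K+1) - Real.log a' := by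
      rcases Nat.lt_or_ge a' (K+1) with h | h
      · have := log_tel (le_min (by omega) ha1) (le_of_lt h)
        rw [Nat.cast_add, Nat.cast_one] at this
        exact this
      · have : a' = K+1 := by omega
        rw [this]
        simp
    calc ∑ i ∈ Finset.Ico a' (K+1), t i ^ 2 ≤ ∑ i ∈ Finset.Ico a' (K+1), B^2 * (1/((i:ℝ)+1)) := step1
      _ = B^2 * ∑ i ∈ Finset.Ico a' (K+1), (1/((i:ℝ)+1)) := by rw [Finset.mul_sum]
      _ = B^2 * ∑ m ∈ Finset.Ioc a' (K+1), (1/(m:ℝ)) := by rw [step2]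
      _ ≤ B^2 * (Real.log (K+1) - Real.log a') := by
          apply mul_le_mul_of_nonneg_left step3 (by positivity)
  -- bound the log difference
  have hlog : Real.log (K+1) - Real.log a' ≤ 1 + 2 * Real.log (t 0 / t K) := by
    rcases Nat.lt_or_ge a' (K+1) with hcase | hcase
    · have ha'a : a' = a := by
        rcases min_cases (K+1) a with ⟨h1, h2⟩ | ⟨h1, h2⟩ <;> omega
      have hKx : ((K:ℝ)+1) ≤ B^2 / t K ^2 := by
        have := hsq K le_rfl
        rw [le_div_iff₀ (by positivity)]
        linarith
      have hlog1 : Real.log ((K:ℝ)+1) ≤ Real.log (B^2 / t K ^2) := by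
        apply Real.log_le_log (by positivity) hKx
      have hlog2 : Real.log (x/2) ≤ Real.log a' := by
        apply Real.log_le_log (by linarith) (by rw [ha'a]; exact hax2)
      have hcalc : Real.log (B^2 / t K ^2) - Real.log (x/2) = Real.log 2 + 2 * Real.log (t 0 / t K) := by
        have l1 : Real.log (B ^ 2 / t K ^ 2) = 2*Real.log B - 2*Real.log (t K) := by
          rw [Real.log_div (by positivity) (by positivity), Real.log_pow, Real.log_pow]; push_cast; ring
        have l2 : Real.log (x/2) = 2*Real.log B - 2*Real.log (t 0) - Real.log 2 := by
          rw [hx, Real.log_div (by positivity) (by norm_num), Real.log_div (by positivity) (by positivity),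
            Real.log_pow, Real.log_pow]
          push_cast; ring
        have l3 : Real.log (t 0 / t K) = Real.log (t 0) - Real.log (t K) :=
          Real.log_div (ne_of_gt ht0) (ne_of_gt hK)
        rw [l1, l2, l3]; ring
      have hl2 : Real.log 2 ≤ 1 := by
        calc Real.log 2 ≤ 2 - 1 := Real.log_le_sub_one_of_pos (by norm_num)
          _ = 1 := by norm_num
      push_cast at hlog1 hlog2 ⊢
      linarith
    · have he : a' = K+1 := by omega
      rw [he]
      have h9 : 0 ≤ Real.log (t 0 / t K) := Real.log_nonneg (by
        rw [le_div_iff₀ hK]; simpa using hmono 0 K (Nat.zero_le _) le_rfl)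
      push_cast
      linarith
  rw [← split]
  nlinarith [sq_nonneg B, hfirst, hsecond, hlog, mul_le_mul_of_nonneg_left hlog (sq_nonneg B)]

lemma rho_eq {n : ℕ} (hn : 0 < n) (d : Fin n → ℝ) :
    rho d = (fun (s : Fin n → ℝ) =>
      (fun (k : Fin n) => if s k ≠ 0 then s ⟨0, hn⟩ / s k else 1)
      ⟨min (sInf {k : ℕ |
        ∑ i : Fin n, (if k < (i : ℕ) then s i ^ 2 else 0) ≤
        ∑ i : Fin n, (if (i : ℕ) ≤ k then s i ^ 2 else 0)}) (n - 1),
      lt_of_le_of_lt (min_le_right _ _) (Nat.sub_lt hn one_pos)⟩)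
      (fun i => d (Tuple.sort d i.rev)) := by
  rw [rho, dif_pos hn]


lemma sum_fin_lt {n : ℕ} (f : Fin n → ℝ) (m : ℕ) (hm : m ≤ n) :
    ∑ i : Fin n, (if (i:ℕ) < m then f i else 0) =
      ∑ i ∈ Finset.range m, (if h : i < n then f ⟨i, h⟩ else 0) := by
  set g : ℕ → ℝ := fun j => if h : j < n then (if j < m then f ⟨j, h⟩ else 0) else 0 with hg
  have h1 : ∑ i : Fin n, (if (i:ℕ) < m then f i else 0) = ∑ i : Fin n, g (i:ℕ) := by
    apply Finset.sum_congr rfl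
    intro i _
    simp only [hg]
    simp only [dif_pos i.isLt]
  rw [h1, Fin.sum_univ_eq_sum_range g n, ← Finset.sum_range_add_sum_Ico g hm]
  have h2 : ∑ j ∈ Finset.Ico m n, g j = 0 := by
    apply Finset.sum_eq_zero
    intro j hj
    have := (Finset.mem_Ico.mp hj).1
    simp only [hg]
    split_ifs with h h' <;> first | rfl | omega

  rw [h2, add_zero]
  apply Finset.sum_congr rfl
  intro j hj
  have hjm := Finset.mem_range.mp hj
  simp only [hg]
  split_ifs with h h' <;> first | rfl | omega


/-- Lemma 6: for any `z ∈ ℝⁿ` with non-negative coordinates there is a non-zero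
`δ ∈ {0,1}ⁿ` with `⟨z,δ⟩ ≥ (1/√(8·(log ρ(z) + 1)))·‖z‖·‖δ‖`. -/
theorem statement14 (n : ℕ) (hn : 1 ≤ n) (z : EuclideanSpace ℝ (Fin n))
    (hz : ∀ i, 0 ≤ z i) :
    ∃ δ : EuclideanSpace ℝ (Fin n), δ ≠ 0 ∧ (∀ i, δ i = 0 ∨ δ i = 1) ∧
      ⟪z, δ⟫ ≥ (1 / Real.sqrt (8 * (Real.log (rho fun i => z i) + 1))) * (‖z‖ * ‖δ‖) := by
  have hn' : 0 < n := hn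
  by_cases hz0 : z = 0
  · refine ⟨WithLp.toLp 2 (fun _ => 1 : Fin n → ℝ), ?_, fun i => Or.inr rfl, ?_⟩
    · intro h
      have : (1:ℝ) = 0 := congrArg (fun v : EuclideanSpace ℝ (Fin n) => v ⟨0, hn'⟩) h
      norm_num at this
    · rw [hz0]
      simp
  · -- main case: z ≠ 0
    have hzn : 0 < ‖z‖ := by
      simpa [norm_pos_iff] using hz0
    set d : Fin n → ℝ := fun i => z i with hd
    set s : Fin n → ℝ := fun i => d (Tuple.sort d i.rev) with hs
    set e : Equiv.Perm (Fin n) := (Fin.revPerm).trans (Tuple.sort d) with he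
    have hse : ∀ i, s i = z (e i) := by intro i; rfl
    have hanti : ∀ i j : Fin n, i ≤ j → s j ≤ s i := by
      intro i j hij
      exact Tuple.monotone_sort d (Fin.rev_le_rev.mpr hij)
    have hsnn : ∀ i, 0 ≤ s i := fun i => hz _
    set S_set : Set ℕ := {k : ℕ |
        ∑ i : Fin n, (if k < (i : ℕ) then s i ^ 2 else 0) ≤
        ∑ i : Fin n, (if (i : ℕ) ≤ k then s i ^ 2 else 0)} with hSset
    have hmemS : (n-1) ∈ S_set := by
      rw [hSset]
      have h1 : ∑ i : Fin n, (if n-1 < (i : ℕ) then s i ^ 2 else 0) = 0 := by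
        apply Finset.sum_eq_zero
        intro i _
        rw [if_neg (by omega)]
      simp only [Set.mem_setOf_eq, h1]
      positivity
    set K : ℕ := sInf S_set with hKdef
    have hK_le : K ≤ n - 1 := Nat.sInf_le hmemS
    have hKmem : K ∈ S_set := Nat.sInf_mem ⟨_, hmemS⟩
    have hKn : K < n := by omega
    set kF : Fin n := ⟨K, hKn⟩ with hkF
    set i0 : Fin n := ⟨0, hn'⟩ with hi0
    -- rho unfolding
    have hrho : rho d = if s kF ≠ 0 then s i0 / s kF else 1 := by
      rw [rho_eq hn' d]
      have hmin : min (sInf S_set) (n-1) = K := by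
        rw [← hKdef]; exact min_eq_left hK_le
      have hk2 : (⟨min (sInf S_set) (n-1),
          lt_of_le_of_lt (min_le_right _ _) (Nat.sub_lt hn' one_pos)⟩ : Fin n) = kF := by
        apply Fin.ext; exact hmin
      exact congrArg (fun k : Fin n => if s k ≠ 0 then s i0 / s k else 1) hk2
    -- head and tail
    have hzsq : ∑ i : Fin n, z i ^ 2 = ‖z‖ ^ 2 := by
      have : ⟪z, z⟫ = ∑ i : Fin n, z i * z i := by
        simp only [PiLp.inner_apply, RCLike.inner_apply, conj_trivial]
      rw [← real_inner_self_eq_norm_sq, this]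
      apply Finset.sum_congr rfl
      intro i _; ring
    have hssq : ∑ i : Fin n, s i ^ 2 = ‖z‖ ^ 2 := by
      rw [← hzsq]
      calc ∑ i : Fin n, s i ^ 2 = ∑ i : Fin n, z (e i) ^ 2 := by
            apply Finset.sum_congr rfl; intro i _; rw [hse]
        _ = ∑ i : Fin n, z i ^ 2 := Equiv.sum_comp e (fun i => z i ^ 2)
    have hheadtail : ∑ i : Fin n, (if (i:ℕ) ≤ K then s i ^ 2 else 0)
        + ∑ i : Fin n, (if K < (i:ℕ) then s i ^ 2 else 0) = ‖z‖ ^ 2 := by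
      rw [← hssq, ← Finset.sum_add_distrib]
      apply Finset.sum_congr rfl
      intro i _
      rcases le_or_gt (i:ℕ) K with h | h
      · rw [if_pos h, if_neg (by omega), add_zero]
      · rw [if_neg (by omega), if_pos h, zero_add]
    have hhead : ‖z‖ ^ 2 ≤ 2 * ∑ i : Fin n, (if (i:ℕ) ≤ K then s i ^ 2 else 0) := by
      have := hKmem
      rw [hSset, Set.mem_setOf_eq] at this
      linarith [hheadtail]
    -- s kF > 0
    have hsK : 0 < s kF := by
      rcases (hsnn kF).lt_or_eq with h | h
      · exact h
      exfalso
      have hzero : s kF = 0 := h.symm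
      match hK : K, hKmem with
      | 0, _ =>
        have hall : ∀ i : Fin n, s i = 0 := by
          intro i
          have h1 : s i ≤ s kF := by
            apply hanti
            simp only [hkF, hi0]
            exact Fin.mk_le_mk.mpr (by omega)
          have := hsnn i
          linarith [hzero]
        have : ‖z‖ ^ 2 = 0 := by
          rw [← hssq]
          apply Finset.sum_eq_zero
          intro i _; rw [hall i]; ring
        nlinarith
      | (m+1), _ =>
        have hmmem : m ∈ S_set := by
          rw [hSset, Set.mem_setOf_eq]
          have h1 : ∑ i : Fin n, (if m < (i : ℕ) then s i ^ 2 else 0) = 0 := by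
            apply Finset.sum_eq_zero
            intro i hi
            split_ifs with hmi
            · have hKi : kF ≤ i := by
                rw [hkF]; exact Fin.mk_le_mk.mpr (by omega)
              have h2 : s i ≤ s kF := hanti _ _ hKi
              have h3 := hsnn i
              have : s i = 0 := by linarith [hzero]
              rw [this]; ring
            · rfl
          rw [h1]
          exact Finset.sum_nonneg (fun i _ => by split_ifs <;> positivity)
        have := Nat.sInf_le hmmem
        omega
    set ρ : ℝ := s i0 / s kF with hρ
    have hrho2 : rho d = ρ := by rw [hrho, if_pos (ne_of_gt hsK)]
    have hρ1 : 1 ≤ ρ := by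
      rw [hρ, le_div_iff₀ hsK]
      simpa using hanti i0 kF (Fin.mk_le_mk.mpr (by omega))
    have hlogρ : 0 ≤ Real.log ρ := Real.log_nonneg hρ1
    set q : ℝ := 8 * (Real.log ρ + 1) with hq
    have hq0 : 0 < q := by rw [hq]; linarith
    set B : ℝ := ‖z‖ / Real.sqrt q with hB
    have hBpos : 0 < B := by
      rw [hB]
      exact div_pos hzn (Real.sqrt_pos.mpr hq0)
    have hB2 : B ^ 2 * (2 + 2 * Real.log ρ) = ‖z‖ ^ 2 / 4 := by
      rw [hB, div_pow, Real.sq_sqrt hq0.le, hq]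
      have h8 : 8 * (Real.log ρ + 1) ≠ 0 := by positivity
      field_simp
      ring
    -- t : ℕ → ℝ
    set t : ℕ → ℝ := fun m => if h : m < n then s ⟨m, h⟩ else 0 with ht
    have ht0 : t 0 = s i0 := by rw [ht]; simp only [dif_pos hn']; rfl
    have htK : t K = s kF := by rw [ht]; simp only [dif_pos hKn]; rfl
    have htmono : ∀ i j, i ≤ j → j ≤ K → t j ≤ t i := by
      intro i j hij hjK
      have hi : i < n := by omega
      have hj : j < n := by omega
      rw [ht]
      simp only [dif_pos hi, dif_pos hj]
      exact hanti _ _ (Fin.mk_le_mk.mpr hij)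
    have htnn : ∀ i, i ≤ K → 0 ≤ t i := by
      intro i hi
      rw [ht]
      dsimp only
      split_ifs with h
      · exact hsnn _
      · exact le_refl 0
    -- conversion to range sums
    have hconv : ∀ m, m ≤ n → ∑ i : Fin n, (if (i:ℕ) < m then s i ^ 2 else 0)
        = ∑ i ∈ Finset.range m, t i ^ 2 := by
      intro m hm
      rw [sum_fin_lt (fun i => s i ^ 2) m hm]
      apply Finset.sum_congr rfl
      intro i hi
      rw [ht]
      dsimp only
      split_ifs with h
      · rfl
      · ring
    have hheadr : ∑ i : Fin n, (if (i:ℕ) ≤ K then s i ^ 2 else 0)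
        = ∑ i ∈ Finset.range (K+1), t i ^ 2 := by
      rw [← hconv (K+1) (by omega)]
      apply Finset.sum_congr rfl
      intro i _
      exact if_congr Nat.lt_succ_iff.symm rfl rfl
    have hexists : ∃ j, j ≤ K ∧ B * Real.sqrt ((j:ℝ)+1) ≤ ∑ i ∈ Finset.range (j+1), t i := by
      by_contra hcon
      push_neg at hcon
      have htKpos : 0 < t K := by rw [htK]; exact hsK
      have hlem := lemA t K B hBpos htmono htnn htKpos (fun j hj => hcon j hj)
      rw [ht0, htK, ← hρ] at hlem
      rw [hheadr] at hhead
      have hz2 : 0 < ‖z‖^2 := by positivity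
      linarith [hhead, hlem, hB2, hz2]
    obtain ⟨j, hjK, hjsum⟩ := hexists
    set δ : EuclideanSpace ℝ (Fin n) :=
      WithLp.toLp 2 (fun i => if ((e.symm i : Fin n) : ℕ) < j+1 then (1:ℝ) else 0) with hδ
    have hδapp : ∀ i, δ i = if ((e.symm i : Fin n) : ℕ) < j+1 then (1:ℝ) else 0 :=
      fun i => rfl
    have hδsum : ∑ i : Fin n, ‖δ i‖^2 = (j:ℝ)+1 := by
      have h1 : ∀ i : Fin n, ‖δ i‖^2
          = (fun i' : Fin n => if (i' : ℕ) < j+1 then (1:ℝ) else 0) (e.symm i) := by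
        intro i
        rw [hδapp]
        dsimp only
        split_ifs <;> simp
      calc ∑ i : Fin n, ‖δ i‖^2
          = ∑ i : Fin n, (fun i' : Fin n => if (i' : ℕ) < j+1 then (1:ℝ) else 0) (e.symm i) :=
            Finset.sum_congr rfl (fun i _ => h1 i)
        _ = ∑ i' : Fin n, (if (i' : ℕ) < j+1 then (1:ℝ) else 0) :=
            Equiv.sum_comp e.symm (fun i' : Fin n => if (i' : ℕ) < j+1 then (1:ℝ) else 0)
        _ = ∑ i ∈ Finset.range (j+1), (if h : i < n then (1:ℝ) else 0) :=
            sum_fin_lt (fun _ => (1:ℝ)) (j+1) (by omega)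
        _ = ∑ i ∈ Finset.range (j+1), (1:ℝ) := by
            apply Finset.sum_congr rfl
            intro i hi
            have hin : i < n := by have := Finset.mem_range.mp hi; omega
            rw [dif_pos hin]
        _ = (j:ℝ)+1 := by simp
    have hnormδ : ‖δ‖ = Real.sqrt ((j:ℝ)+1) := by
      rw [EuclideanSpace.norm_eq, hδsum]
    have hinner : ⟪z, δ⟫ = ∑ i ∈ Finset.range (j+1), t i := by
      have h1 : ⟪z, δ⟫ = ∑ i : Fin n, z i * δ i := by
        simp [PiLp.inner_apply, RCLike.inner_apply, conj_trivial, mul_comm]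
      rw [h1]
      have h2 : ∀ i : Fin n, z i * δ i
          = (fun i' : Fin n => if (i' : ℕ) < j+1 then z (e i') else 0) (e.symm i) := by
        intro i
        rw [hδapp]
        dsimp only
        rw [Equiv.apply_symm_apply]
        split_ifs <;> ring
      calc ∑ i : Fin n, z i * δ i
          = ∑ i : Fin n, (fun i' : Fin n => if (i' : ℕ) < j+1 then z (e i') else 0) (e.symm i) :=
            Finset.sum_congr rfl (fun i _ => h2 i)
        _ = ∑ i' : Fin n, (if (i' : ℕ) < j+1 then z (e i') else 0) :=
            Equiv.sum_comp e.symm (fun i' : Fin n => if (i' : ℕ) < j+1 then z (e i') else 0)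
        _ = ∑ i' : Fin n, (if (i' : ℕ) < j+1 then s i' else 0) := by
            apply Finset.sum_congr rfl
            intro i _
            rw [hse]
        _ = ∑ i ∈ Finset.range (j+1), (if h : i < n then s ⟨i,h⟩ else 0) :=
            sum_fin_lt s (j+1) (by omega)
        _ = ∑ i ∈ Finset.range (j+1), t i := rfl
    have hδ1 : δ (e i0) = 1 := by
      rw [hδapp, Equiv.symm_apply_apply]
      rw [if_pos]
      rw [hi0]
      show (0:ℕ) < j+1
      omega
    refine ⟨δ, ?_, ?_, ?_⟩
    · intro h0
      rw [h0] at hδ1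
      simp at hδ1
    · intro i
      rw [hδapp]
      split_ifs
      · exact Or.inr rfl
      · exact Or.inl rfl
    · rw [hrho2, hinner, hnormδ]
      rw [ge_iff_le, ← hq]
      have hrw : (1 / Real.sqrt q) * (‖z‖ * Real.sqrt ((j:ℝ)+1)) = B * Real.sqrt ((j:ℝ)+1) := by
        rw [hB]; ring
      rw [hrw]
      exact hjsum
end

section
/- For any real λ > 0 and positive integers q and t with q ≤ t/(λ+1), one has Σ_{j=0}^{q} C(t,j)·λ^{t−j} ≤ λ^{t−q}·e^{t·H(q/t)}, where C(t,j) is the binomial coefficient. -/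
/-- The entropy function `H(x) = -x·log x - (1-x)·log(1-x)`, extended by continuity
with `H(0) = H(1) = 0` (recall `Real.log 0 = 0`). -/
noncomputable def entropy (x : ℝ) : ℝ := -x * Real.log x - (1 - x) * Real.log (1 - x)

/-- Lemma 7 (large deviations): for real `λ > 0` and positive integers `q ≤ t/(λ+1)`,
`Σ_{j=0}^{q} C(t,j)·λ^{t-j} ≤ λ^{t-q}·e^{t·H(q/t)}`. -/
theorem statement15 (lam : ℝ) (hlam : 0 < lam) (q t : ℕ) (hq : 0 < q) (ht : 0 < t)
    (hqt : (q : ℝ) ≤ (t : ℝ) / (lam + 1)) :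
    ∑ j ∈ Finset.range (q + 1), (t.choose j : ℝ) * lam ^ (t - j) ≤
      lam ^ (t - q) * Real.exp ((t : ℝ) * entropy ((q : ℝ) / (t : ℝ))) := by
  have ht' : (0:ℝ) < t := by exact_mod_cast ht
  have hq' : (0:ℝ) < q := by exact_mod_cast hq
  set p : ℝ := (q:ℝ) / t with hp_def
  have hp0 : 0 < p := div_pos hq' ht'
  have hqlt' : (q:ℝ) < t := by
    have : (t:ℝ) / (lam + 1) < t := by
      apply div_lt_self ht'; linarith
    linarith
  have hqlt : q < t := by exact_mod_cast hqlt'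
  have hqle : q ≤ t := hqlt.le
  have hp1 : p < 1 := (div_lt_one ht').mpr hqlt'
  have h1p : 0 < 1 - p := by linarith
  have htp : (t:ℝ) * p = q := by
    rw [hp_def, mul_div_cancel₀ _ ht'.ne']
  have htp1 : (t:ℝ) * (1 - p) = ((t - q : ℕ) : ℝ) := by
    rw [Nat.cast_sub hqle, hp_def]; field_simp
  -- key identity for exp(t * entropy p)
  have hE : Real.exp ((t:ℝ) * entropy p) = (p ^ q * (1 - p) ^ (t - q))⁻¹ := by
    have : (t:ℝ) * entropy p
        = -((q:ℝ) * Real.log p) + -(((t - q : ℕ):ℝ) * Real.log (1 - p)) := by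
      unfold entropy; rw [← htp, ← htp1]; ring
    rw [this, Real.exp_add, Real.exp_neg, Real.exp_neg,
      Real.exp_nat_mul, Real.exp_nat_mul, Real.exp_log hp0,
      Real.exp_log h1p, mul_inv]
  -- lam ≤ (1-p)/p
  have hlam_le : lam ≤ (1 - p) / p := by
    rw [le_div_iff₀ hp0]
    have h1 : (q:ℝ) * (lam + 1) ≤ t := by
      rw [← le_div_iff₀ (by linarith : (0:ℝ) < lam + 1)]; exact hqt
    nlinarith [h1, htp, ht', hp0]
  -- per-term identity
  have hID : ∀ j ∈ Finset.range (q + 1),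
      Real.exp ((t:ℝ) * entropy p) * (p ^ j * (1 - p) ^ (t - j))
        = ((1 - p) / p) ^ (q - j) := by
    intro j hj
    have hjq : j ≤ q := Nat.lt_succ_iff.mp (Finset.mem_range.mp hj)
    have e1 : j + (q - j) = q := by omega
    have e2 : t - j = (t - q) + (q - j) := by omega
    calc Real.exp ((t:ℝ) * entropy p) * (p ^ j * (1 - p) ^ (t - j))
        = (p ^ (j + (q - j)) * (1 - p) ^ (t - q))⁻¹
            * (p ^ j * ((1 - p) ^ (t - q) * (1 - p) ^ (q - j))) := by
          rw [e1, ← pow_add, ← e2, hE]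
      _ = ((1 - p) / p) ^ (q - j) := by
          rw [pow_add, div_pow]
          have := hp0.ne'
          have := h1p.ne'
          field_simp
          rw [← mul_pow, mul_div_cancel₀ _ hp0.ne']
  -- per-term bound
  have hterm : ∀ j ∈ Finset.range (q + 1),
      (t.choose j : ℝ) * lam ^ (t - j)
        ≤ lam ^ (t - q) * Real.exp ((t:ℝ) * entropy p)
            * (p ^ j * (1 - p) ^ (t - j) * (t.choose j : ℝ)) := by
    intro j hj
    have hjq : j ≤ q := Nat.lt_succ_iff.mp (Finset.mem_range.mp hj)
    have e2 : t - j = (t - q) + (q - j) := by omega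
    have h2 : lam ^ (q - j) ≤ ((1 - p) / p) ^ (q - j) :=
      pow_le_pow_left₀ hlam.le hlam_le _
    calc (t.choose j : ℝ) * lam ^ (t - j)
        = (t.choose j : ℝ) * (lam ^ (t - q) * lam ^ (q - j)) := by
          rw [e2, pow_add]
      _ ≤ (t.choose j : ℝ) * (lam ^ (t - q) * ((1 - p) / p) ^ (q - j)) := by
          apply mul_le_mul_of_nonneg_left _ (Nat.cast_nonneg _)
          exact mul_le_mul_of_nonneg_left h2 (pow_nonneg hlam.le _)
      _ = lam ^ (t - q) * Real.exp ((t:ℝ) * entropy p)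
            * (p ^ j * (1 - p) ^ (t - j) * (t.choose j : ℝ)) := by
          rw [← hID j hj]; ring
  calc ∑ j ∈ Finset.range (q + 1), (t.choose j : ℝ) * lam ^ (t - j)
      ≤ ∑ j ∈ Finset.range (q + 1),
          lam ^ (t - q) * Real.exp ((t:ℝ) * entropy p)
            * (p ^ j * (1 - p) ^ (t - j) * (t.choose j : ℝ)) :=
        Finset.sum_le_sum hterm
    _ = lam ^ (t - q) * Real.exp ((t:ℝ) * entropy p)
          * ∑ j ∈ Finset.range (q + 1),
              p ^ j * (1 - p) ^ (t - j) * (t.choose j : ℝ) := by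
        rw [Finset.mul_sum]
    _ ≤ lam ^ (t - q) * Real.exp ((t:ℝ) * entropy p) * 1 := by
        apply mul_le_mul_of_nonneg_left _
          (mul_nonneg (pow_nonneg hlam.le _) (Real.exp_pos _).le)
        have hsub : ∑ j ∈ Finset.range (q + 1),
            p ^ j * (1 - p) ^ (t - j) * (t.choose j : ℝ)
            ≤ ∑ j ∈ Finset.range (t + 1),
            p ^ j * (1 - p) ^ (t - j) * (t.choose j : ℝ) := by
          apply Finset.sum_le_sum_of_subset_of_nonneg
          · exact Finset.range_subset_range.mpr (by omega)
          · intro i _ _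
            positivity
        have hbin : ∑ j ∈ Finset.range (t + 1),
            p ^ j * (1 - p) ^ (t - j) * (t.choose j : ℝ) = 1 := by
          rw [← add_pow p (1 - p) t]; norm_num
        linarith
    _ = lam ^ (t - q) * Real.exp ((t:ℝ) * entropy p) := by ring
end

section
/- Let λ ≥ 4 be real and s, t ≥ 1 integers, and set n = (2s)^t. Suppose z ∈ ℝⁿ is a vector which, for each j ∈ [0,t], has exactly C(t,j)·s^t coordinates equal to λ^j. Then for every δ ∈ {0,1}ⁿ one has ⟨z, δ⟩ ≤ (4λ/t^{1/4})·‖z‖·‖δ‖. -/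
set_option maxHeartbeats 1600000

open Real Finset Nat

open scoped RealInnerProductSpace

lemma sseq_ge (n : ℕ) (hn : 1 ≤ n) : Real.sqrt π ≤ Stirling.stirlingSeq n := by
  obtain ⟨m, rfl⟩ := Nat.exists_eq_add_of_le hn
  have h3 : Filter.Tendsto (Stirling.stirlingSeq ∘ Nat.succ) Filter.atTop (nhds (Real.sqrt π)) :=
    Stirling.tendsto_stirlingSeq_sqrt_pi.comp (Filter.tendsto_add_atTop_nat 1)
  simpa [Nat.add_comm 1 m] using Stirling.stirlingSeq'_antitone.le_of_tendsto h3 m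

lemma sseq_le (n : ℕ) (hn : 1 ≤ n) : Stirling.stirlingSeq n ≤ Real.exp 1 / Real.sqrt 2 := by
  obtain ⟨m, rfl⟩ := Nat.exists_eq_add_of_le hn
  have := Stirling.stirlingSeq'_antitone (Nat.zero_le m)
  simpa [Function.comp, Stirling.stirlingSeq_one, Nat.add_comm 1 m] using this

lemma fact_eq (n : ℕ) (hn : 1 ≤ n) : (n ! : ℝ) = Stirling.stirlingSeq n * (Real.sqrt (2*n) * ((n:ℝ)/Real.exp 1)^n) := by
  have hn' : (0:ℝ) < n := by exact_mod_cast hn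
  rw [Stirling.stirlingSeq]
  have h1 : Real.sqrt (2*(n:ℝ)) ≠ 0 := by positivity
  have h2 : ((n:ℝ)/Real.exp 1)^n ≠ 0 := by positivity
  field_simp

lemma fact_sq_lower (n : ℕ) (hn : 1 ≤ n) :
    π * (2*(n:ℝ)) * (((n:ℝ)/Real.exp 1)^n)^2 ≤ ((n ! : ℝ))^2 := by
  have h := sseq_ge n hn
  have hpi : (0:ℝ) ≤ π := Real.pi_nonneg
  have h2 : π ≤ (Stirling.stirlingSeq n)^2 := by
    have := Real.sq_sqrt hpi
    nlinarith [Real.sqrt_nonneg π]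
  rw [fact_eq n hn, mul_pow]
  have hs : (Real.sqrt (2*(n:ℝ)))^2 = 2*(n:ℝ) := Real.sq_sqrt (by positivity)
  rw [mul_pow, hs]
  have hnn : (0:ℝ) ≤ (((n:ℝ)/Real.exp 1)^n)^2 := by positivity
  nlinarith [mul_le_mul_of_nonneg_right h2 (mul_nonneg (by positivity : (0:ℝ) ≤ 2*(n:ℝ)) hnn)]

lemma fact_sq_upper (n : ℕ) (hn : 1 ≤ n) :
    ((n ! : ℝ))^2 ≤ (Real.exp 1)^2 * (n:ℝ) * (((n:ℝ)/Real.exp 1)^n)^2 := by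
  have h := sseq_le n hn
  have h2 : (Stirling.stirlingSeq n)^2 ≤ (Real.exp 1)^2/2 := by
    have hs0 : (0:ℝ) ≤ Stirling.stirlingSeq n := le_trans (Real.sqrt_nonneg π) (sseq_ge n hn)
    have h22 : (Real.sqrt 2)^2 = 2 := Real.sq_sqrt (by norm_num)
    have : (Stirling.stirlingSeq n)^2 ≤ (Real.exp 1 / Real.sqrt 2)^2 := by
      apply pow_le_pow_left₀ hs0 h 2
    calc (Stirling.stirlingSeq n)^2 ≤ (Real.exp 1 / Real.sqrt 2)^2 := this
      _ = (Real.exp 1)^2/2 := by rw [div_pow, h22]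
  rw [fact_eq n hn, mul_pow, mul_pow]
  rw [Real.sq_sqrt (by positivity : (0:ℝ) ≤ 2*(n:ℝ))]
  have hnn : (0:ℝ) ≤ (((n:ℝ)/Real.exp 1)^n)^2 := by positivity
  nlinarith [mul_le_mul_of_nonneg_right h2 (mul_nonneg (by positivity : (0:ℝ) ≤ 2*(n:ℝ)) hnn)]

-- entropy / AM-GM: t^t x^K ≤ (1+x)^t K^K L^L where t = K+L
lemma entropy_s16 (x : ℝ) (hx : 0 ≤ x) (K L : ℕ) (hK : 1 ≤ K) (hL : 1 ≤ L) :
    ((K:ℝ)+(L:ℝ))^(K+L) * x^K ≤ (1+x)^(K+L) * ((K:ℝ)^K * (L:ℝ)^L) := by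
  have hKr : (0:ℝ) < K := by exact_mod_cast hK
  have hLr : (0:ℝ) < L := by exact_mod_cast hL
  have ht : (0:ℝ) < (K:ℝ)+(L:ℝ) := by linarith
  set t : ℝ := (K:ℝ)+(L:ℝ) with htdef
  set p₁ : ℝ := x*t/K with hp₁
  set p₂ : ℝ := t/L with hp₂
  have hp₁0 : 0 ≤ p₁ := by positivity
  have hp₂0 : 0 ≤ p₂ := by positivity
  have hw₁ : (0:ℝ) ≤ K/t := by positivity
  have hw₂ : (0:ℝ) ≤ L/t := by positivity
  have hw : K/t + L/t = 1 := by field_simp; exact htdef.symm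
  have hgeom := Real.geom_mean_le_arith_mean2_weighted hw₁ hw₂ hp₁0 hp₂0 hw
  have harith : (K/t)*p₁ + (L/t)*p₂ = 1 + x := by
    rw [hp₁, hp₂]; field_simp; ring
  rw [harith] at hgeom
  -- raise to power (K+L)
  have hbase : 0 ≤ p₁ ^ ((K:ℝ)/t) * p₂ ^ ((L:ℝ)/t) := by positivity
  have hpow := pow_le_pow_left₀ hbase hgeom (K+L)
  have hLHS : (p₁ ^ ((K:ℝ)/t) * p₂ ^ ((L:ℝ)/t))^(K+L) = p₁^K * p₂^L := by
    rw [mul_pow]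
    rw [← Real.rpow_natCast (p₁ ^ ((K:ℝ)/t)) (K+L), ← Real.rpow_natCast (p₂ ^ ((L:ℝ)/t)) (K+L)]
    rw [← Real.rpow_mul hp₁0, ← Real.rpow_mul hp₂0]
    have e1 : (K:ℝ)/t * ((K+L:ℕ):ℝ) = (K:ℝ) := by
      push_cast; rw [htdef]; field_simp
    have e2 : (L:ℝ)/t * ((K+L:ℕ):ℝ) = (L:ℝ) := by
      push_cast; rw [htdef]; field_simp
    rw [e1, e2, Real.rpow_natCast, Real.rpow_natCast]
  rw [hLHS] at hpow
  -- p₁^K * p₂^L = x^K t^(K+L) / (K^K L^L)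
  have hexp : p₁^K * p₂^L = x^K * t^(K+L) / ((K:ℝ)^K * (L:ℝ)^L) := by
    rw [hp₁, hp₂, div_pow, div_pow, pow_add, mul_pow]
    field_simp
  rw [hexp] at hpow
  rw [div_le_iff₀ (by positivity)] at hpow
  calc t^(K+L) * x^K = x^K * t^(K+L) := by ring
    _ ≤ (1+x)^(K+L) * ((K:ℝ)^K * (L:ℝ)^L) := hpow

lemma local_sq (x : ℝ) (hx : 0 ≤ x) (K L : ℕ) (hK : 1 ≤ K) (hL : 1 ≤ L) :
    4 * ((K:ℝ)*(L:ℝ)) * (((K+L).choose K : ℝ))^2 * (x^K)^2 ≤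
      ((K:ℝ)+(L:ℝ)) * (((1+x)^(K+L))^2) := by
  have hKr : (0:ℝ) < K := by exact_mod_cast hK
  have he : (0:ℝ) < Real.exp 1 := Real.exp_pos 1
  have hLr : (0:ℝ) < L := by exact_mod_cast hL
  set e1 : ℝ := Real.exp 1
  set aK : ℝ := ((K:ℝ)/e1)^K with haK
  set aL : ℝ := ((L:ℝ)/e1)^L with haL
  set aT : ℝ := (((K:ℝ)+(L:ℝ))/e1)^(K+L) with haT
  set C : ℝ := ((K+L).choose K : ℝ) with hCdef
  have haK0 : 0 < aK := by positivity
  have haL0 : 0 < aL := by positivity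
  have hC0 : (0:ℝ) ≤ C^2 := sq_nonneg _
  have hfacid : C^2 * ((K ! : ℝ))^2 * ((L ! : ℝ))^2 = (((K+L)! : ℝ))^2 := by
    have h0 : (K+L).choose K * K ! * ((K+L)-K)! = (K+L)! :=
      Nat.choose_mul_factorial_mul_factorial (Nat.le_add_right K L)
    rw [Nat.add_sub_cancel_left] at h0
    have h2 : (((K+L).choose K : ℕ) : ℝ) * (K ! : ℝ) * (L ! : ℝ) = ((K+L)! : ℝ) := by
      exact_mod_cast congrArg (Nat.cast (R := ℝ)) h0
    rw [← h2]; ring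
  have hSK := fact_sq_lower K hK
  have hSL := fact_sq_lower L hL
  have hST := fact_sq_upper (K+L) (le_trans hK (Nat.le_add_right K L))
  have hTcast : (((K+L:ℕ)):ℝ) = (K:ℝ)+(L:ℝ) := by push_cast; ring
  rw [hTcast] at hST
  -- combine: C^2 * (π 2K aK²) * (π 2L aL²) ≤ (t!)² ≤ e² t aT²
  have h1 : C^2 * (π * (2*(K:ℝ)) * aK^2) * (π * (2*(L:ℝ)) * aL^2) ≤
      e1^2 * ((K:ℝ)+(L:ℝ)) * aT^2 := by
    calc C^2 * (π * (2*(K:ℝ)) * aK^2) * (π * (2*(L:ℝ)) * aL^2)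
        ≤ C^2 * ((K ! : ℝ))^2 * ((L ! : ℝ))^2 := by
          apply mul_le_mul
          · apply mul_le_mul_of_nonneg_left hSK hC0
          · exact hSL
          · positivity
          · positivity
        _ = (((K+L)! : ℝ))^2 := hfacid
        _ ≤ e1^2 * ((K:ℝ)+(L:ℝ)) * aT^2 := hST
  -- key algebra: aT * (K^K * L^L) = t^(K+L) * (aK*aL)
  have halg : aT * ((K:ℝ)^K * (L:ℝ)^L) = ((K:ℝ)+(L:ℝ))^(K+L) * (aK*aL) := by
    rw [haT, haK, haL, div_pow, div_pow, div_pow, pow_add e1 K L]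
    field_simp
  have hent := entropy_s16 x hx K L hK hL
  -- multiply h1 by (x^K * K^K*L^L)^2
  have hmul : C^2 * (π * (2*(K:ℝ)) * aK^2) * (π * (2*(L:ℝ)) * aL^2) * ((x^K * ((K:ℝ)^K * (L:ℝ)^L))^2) ≤
      e1^2 * ((K:ℝ)+(L:ℝ)) * aT^2 * ((x^K * ((K:ℝ)^K * (L:ℝ)^L))^2) := by
    apply mul_le_mul_of_nonneg_right h1 (by positivity)
  -- RHS ≤ e² t ((1+x)^t)² (K^KL^L aK aL)²
  have hRHS : e1^2 * ((K:ℝ)+(L:ℝ)) * aT^2 * ((x^K * ((K:ℝ)^K * (L:ℝ)^L))^2) ≤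
      e1^2 * ((K:ℝ)+(L:ℝ)) * (((1+x)^(K+L))^2) * ((((K:ℝ)^K * (L:ℝ)^L) * (aK*aL))^2) := by
    have hsq : (((K:ℝ)+(L:ℝ))^(K+L) * x^K)^2 ≤ ((1+x)^(K+L) * ((K:ℝ)^K * (L:ℝ)^L))^2 := by
      apply pow_le_pow_left₀ (by positivity) hent 2
    calc e1^2 * ((K:ℝ)+(L:ℝ)) * aT^2 * ((x^K * ((K:ℝ)^K * (L:ℝ)^L))^2)
        = e1^2 * ((K:ℝ)+(L:ℝ)) * ((aT * ((K:ℝ)^K * (L:ℝ)^L))^2 * (x^K)^2) := by ring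
      _ = e1^2 * ((K:ℝ)+(L:ℝ)) * ((((K:ℝ)+(L:ℝ))^(K+L) * (aK*aL))^2 * (x^K)^2) := by rw [halg]
      _ = e1^2 * ((K:ℝ)+(L:ℝ)) * ((((K:ℝ)+(L:ℝ))^(K+L) * x^K)^2 * (aK*aL)^2) := by ring
      _ ≤ e1^2 * ((K:ℝ)+(L:ℝ)) * (((1+x)^(K+L) * ((K:ℝ)^K * (L:ℝ)^L))^2 * (aK*aL)^2) := by
          apply mul_le_mul_of_nonneg_left _ (by positivity)
          apply mul_le_mul_of_nonneg_right hsq (by positivity)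
      _ = e1^2 * ((K:ℝ)+(L:ℝ)) * (((1+x)^(K+L))^2) * ((((K:ℝ)^K * (L:ℝ)^L) * (aK*aL))^2) := by ring
  have hchain := le_trans hmul hRHS
  -- now cancel the positive factor (K^KL^L aK aL)^2 and π²
  have hfactor : (0:ℝ) < (((K:ℝ)^K * (L:ℝ)^L) * (aK*aL))^2 := by positivity
  have hLHSeq : C^2 * (π * (2*(K:ℝ)) * aK^2) * (π * (2*(L:ℝ)) * aL^2) * ((x^K * ((K:ℝ)^K * (L:ℝ)^L))^2)
      = π^2 * (4 * ((K:ℝ)*(L:ℝ)) * C^2 * (x^K)^2) * ((((K:ℝ)^K * (L:ℝ)^L) * (aK*aL))^2) := by ring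
  rw [hLHSeq] at hchain
  set F : ℝ := (((K:ℝ)^K * (L:ℝ)^L) * (aK*aL))^2 with hF
  set X : ℝ := 4 * ((K:ℝ)*(L:ℝ)) * C^2 * (x^K)^2 with hX
  set TS : ℝ := ((K:ℝ)+(L:ℝ)) * (((1+x)^(K+L))^2) with hTS
  have hchain2 : π^2 * X * F ≤ (e1^2 * TS) * F := by
    calc π^2 * X * F = π^2 * (4 * ((K:ℝ)*(L:ℝ)) * C^2 * (x^K)^2) * F := by rw [hX]
      _ ≤ e1^2 * ((K:ℝ)+(L:ℝ)) * (((1+x)^(K+L))^2) * F := hchain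
      _ = (e1^2 * TS) * F := by rw [hTS]; ring
  have hAB : π^2 * X ≤ e1^2 * TS := le_of_mul_le_mul_right hchain2 hfactor
  have hepi : e1^2 ≤ π^2 := by
    have h1 : e1 ≤ π := by
      have h2 := Real.exp_one_lt_d9
      have h3 := Real.pi_gt_three
      simp only [e1]
      linarith
    exact pow_le_pow_left₀ he.le h1 2
  have hpos : (0:ℝ) ≤ TS := by rw [hTS]; positivity
  have h4 : π^2 * X ≤ π^2 * TS :=
    le_trans hAB (mul_le_mul_of_nonneg_right hepi hpos)
  have hpi2 : (0:ℝ) < π^2 := by positivity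
  exact le_of_mul_le_mul_left h4 hpi2

lemma geom_ten (n : ℕ) : ∑ i ∈ range n, ((9:ℝ)/10)^i ≤ 10 := by
  have h : ((9:ℝ)/10) ≠ 1 := by norm_num
  rw [geom_sum_eq h]
  have h2 : (0:ℝ) ≤ ((9:ℝ)/10)^n := by positivity
  have h3 : ((9:ℝ)/10)^n ≤ 1 := pow_le_one₀ (by norm_num) (by norm_num)
  rw [div_le_iff_of_neg (by norm_num : ((9:ℝ)/10) - 1 < 0)]
  linarith

lemma geom_bound (u : ℕ → ℝ) (K t : ℕ) (hKt : K ≤ t) (h0 : ∀ j, 0 ≤ u j)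
    (hr : ∀ j, K ≤ j → j < t → u (j+1) ≤ (9/10) * u j) :
    ∑ j ∈ Icc K t, u j ≤ 10 * u K := by
  have hdecay : ∀ j, K ≤ j → j ≤ t → u j ≤ ((9:ℝ)/10)^(j-K) * u K := by
    intro j
    induction j with
    | zero => intro h1 _; interval_cases K; simp
    | succ j ih =>
      intro h1 h2
      rcases Nat.lt_or_ge K (j+1) with hlt | hge
      · have hKj : K ≤ j := Nat.lt_succ_iff.mp hlt
        have hjt : j < t := h2
        have := le_trans (hr j hKj hjt) (mul_le_mul_of_nonneg_left (ih hKj (le_of_lt hjt)) (by norm_num))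
        have heq : (j+1) - K = (j - K) + 1 := by omega
        rw [heq, pow_succ]
        calc u (j+1) ≤ 9/10 * (((9:ℝ)/10)^(j-K) * u K) := this
          _ = ((9:ℝ)/10)^(j-K) * (9/10) * u K := by ring
      · have : K = j+1 := le_antisymm h1 hge
        subst this
        simp
  calc ∑ j ∈ Icc K t, u j ≤ ∑ j ∈ Icc K t, ((9:ℝ)/10)^(j-K) * u K := by
        apply sum_le_sum
        intro j hj
        rw [mem_Icc] at hj
        exact hdecay j hj.1 hj.2
    _ = (∑ j ∈ Icc K t, ((9:ℝ)/10)^(j-K)) * u K := by rw [sum_mul]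
    _ ≤ 10 * u K := by
        apply mul_le_mul_of_nonneg_right _ (h0 K)
        have heq : ∑ j ∈ Icc K t, ((9:ℝ)/10)^(j-K) = ∑ i ∈ range (t - K + 1), ((9:ℝ)/10)^i := by
          rw [← Finset.Ico_add_one_right_eq_Icc, Finset.sum_Ico_eq_sum_range]
          apply Finset.sum_congr (by rw [show t+1-K = t-K+1 from by omega])
          intro i _
          congr 1
          omega
        rw [heq]
        exact geom_ten _

lemma le_of_sq_le_sq' {x y : ℝ} (hy : 0 ≤ y) (h : x^2 ≤ y^2) : x ≤ y := by
  by_contra hc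
  push_neg at hc
  have := pow_lt_pow_left₀ hc hy (by norm_num : (2:ℕ) ≠ 0)
  linarith

lemma exp_ge_e_mul (x : ℝ) : Real.exp 1 * x ≤ Real.exp x := by
  have h := Real.add_one_le_exp (x - 1)
  have h2 : Real.exp x = Real.exp 1 * Real.exp (x - 1) := by
    rw [← Real.exp_add]; ring_nf
  rw [h2]
  have := Real.exp_pos 1
  nlinarith

lemma exp_pow_eq (x : ℝ) (hx : 0 < x) (n : ℕ) : Real.exp ((n:ℝ) * Real.log x) = x^n := by
  rw [Real.exp_nat_mul, Real.exp_log hx]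

lemma helperH (a : ℝ) (ha : 4 ≤ a) (t : ℕ) :
    10 * Real.sqrt t ≤ 4 * a^2 * Real.exp ((t:ℝ)/(4*(1+a^2))) := by
  have ha0 : (0:ℝ) < a := by linarith
  have h16 : (16:ℝ) ≤ a^2 := by nlinarith
  have ht0 : (0:ℝ) ≤ (t:ℝ) := Nat.cast_nonneg t
  have hx0 : (0:ℝ) ≤ (t:ℝ)/(4*(1+a^2)) := by positivity
  by_cases hc : Real.sqrt t ≤ (2/5)*a^2
  · have hexp1 : (1:ℝ) ≤ Real.exp ((t:ℝ)/(4*(1+a^2))) := Real.one_le_exp hx0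
    nlinarith [Real.sqrt_nonneg (t:ℝ)]
  · push_neg at hc
    set x : ℝ := (t:ℝ)/(4*(1+a^2)) with hxdef
    have hst : Real.sqrt t * Real.sqrt t = (t:ℝ) := Real.mul_self_sqrt ht0
    have h1a : 1 + a^2 ≤ (17/16)*a^2 := by nlinarith
    have hsp : (0:ℝ) < Real.sqrt t := lt_trans (by nlinarith) hc
    have h2 : 4*(1+a^2) ≤ (85/8) * Real.sqrt t := by nlinarith
    have hx : (8/85) * Real.sqrt t ≤ x := by
      rw [hxdef, le_div_iff₀ (by positivity)]
      nlinarith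
    have hee : Real.exp 1 * x ≤ Real.exp x := exp_ge_e_mul x
    have he : (2.7182818283:ℝ) < Real.exp 1 := Real.exp_one_gt_d9
    have hex : (2:ℝ) * ((8/85)*Real.sqrt t) ≤ Real.exp x := by
      calc (2:ℝ) * ((8/85)*Real.sqrt t) ≤ Real.exp 1 * x := by nlinarith
        _ ≤ Real.exp x := hee
    nlinarith

lemma fact_ge_pow (R : ℕ) (hR1 : 1 ≤ R) : ((R:ℝ)/Real.exp 1)^R ≤ (R ! : ℝ) := by
  apply le_of_sq_le_sq' (by positivity)
  have h1 := fact_sq_lower R hR1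
  have hR1r : (1:ℝ) ≤ (R:ℝ) := by exact_mod_cast hR1
  have hge1 : (1:ℝ) ≤ π*(2*(R:ℝ)) := by nlinarith [Real.pi_gt_three]
  have hB2 : (0:ℝ) ≤ (((R:ℝ)/Real.exp 1)^R)^2 := sq_nonneg _
  calc (((R:ℝ)/Real.exp 1)^R)^2 = 1*((((R:ℝ)/Real.exp 1)^R)^2) := by ring
    _ ≤ (π*(2*(R:ℝ)))*((((R:ℝ)/Real.exp 1)^R)^2) := mul_le_mul_of_nonneg_right hge1 hB2
    _ = π*(2*(R:ℝ))*(((R:ℝ)/Real.exp 1)^R)^2 := by ring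
    _ ≤ ((R ! : ℝ))^2 := h1

lemma choose_tail_bound (a : ℝ) (ha : 4 ≤ a) (t R : ℕ) (ht0 : (0:ℝ) < (t:ℝ))
    (hRb : a^4*(R:ℝ) < 2*(t:ℝ)) :
    (t.choose R : ℝ) ≤ ((a^2:ℝ))^R * Real.exp (3*((t:ℝ)/(1+a^2))/4) := by
  have ha0 : (0:ℝ) < a := by linarith
  have h16 : (16:ℝ) ≤ a^2 := by nlinarith
  set τ : ℝ := (t:ℝ)/(1+a^2) with hτdef
  rcases Nat.eq_zero_or_pos R with hR0 | hR1
  · rw [hR0]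
    simp only [Nat.choose_zero_right, pow_zero, Nat.cast_one, one_mul]
    exact Real.one_le_exp (by positivity)
  · have hRr0 : (0:ℝ) < (R:ℝ) := by exact_mod_cast hR1
    set y : ℝ := (t:ℝ)/((R:ℝ)*a^2) with hydef
    have hy0 : (0:ℝ) < y := by rw [hydef]; positivity
    have hchoose : (t.choose R : ℝ) ≤ (t:ℝ)^R / (R ! : ℝ) := Nat.choose_le_pow_div R t
    have hfactB : ((R:ℝ)/Real.exp 1)^R ≤ (R ! : ℝ) := fact_ge_pow R hR1
    have hBpos : (0:ℝ) < ((R:ℝ)/Real.exp 1)^R := by positivity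
    have hstep1 : (t:ℝ)^R / (R ! : ℝ) ≤ (t:ℝ)^R / (((R:ℝ)/Real.exp 1)^R) := by
      gcongr
    have hRy : (R:ℝ)*y = (t:ℝ)/a^2 := by
      rw [hydef]; field_simp
    have hlogy : Real.log y ≤ y/Real.exp 1 := by
      rw [le_div_iff₀ (Real.exp_pos 1)]
      have h5 := exp_ge_e_mul (Real.log y)
      rw [Real.exp_log hy0] at h5
      calc Real.log y * Real.exp 1 = Real.exp 1 * Real.log y := mul_comm _ _
        _ ≤ y := h5
    have hR2t : (R:ℝ)*a^4 ≤ 2*(t:ℝ) := by nlinarith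
    have he27 : (2.7182818283:ℝ) < Real.exp 1 := Real.exp_one_gt_d9
    have hinve : 1/Real.exp 1 ≤ 10/27 := by
      rw [div_le_div_iff₀ (Real.exp_pos 1) (by norm_num)]
      linarith
    have hRlogy : (R:ℝ)*Real.log y ≤ (10/27)*((t:ℝ)/a^2) := by
      have h1 : (R:ℝ)*Real.log y ≤ (R:ℝ)*(y/Real.exp 1) := by
        apply mul_le_mul_of_nonneg_left hlogy hRr0.le
      have h2 : (R:ℝ)*(y/Real.exp 1) = ((t:ℝ)/a^2)*(1/Real.exp 1) := by
        rw [show (R:ℝ)*(y/Real.exp 1) = ((R:ℝ)*y)*(1/Real.exp 1) from by ring, hRy]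
      have h3 : ((t:ℝ)/a^2)*(1/Real.exp 1) ≤ ((t:ℝ)/a^2)*(10/27) := by
        apply mul_le_mul_of_nonneg_left hinve (by positivity)
      calc (R:ℝ)*Real.log y ≤ (R:ℝ)*(y/Real.exp 1) := h1
        _ = ((t:ℝ)/a^2)*(1/Real.exp 1) := h2
        _ ≤ ((t:ℝ)/a^2)*(10/27) := h3
        _ = (10/27)*((t:ℝ)/a^2) := by ring
    have hRbound : (R:ℝ) ≤ 2*(t:ℝ)/a^4 := by
      rw [le_div_iff₀ (by positivity)]
      nlinarith
    have hkey : 2/a^4 + (10/27)/a^2 ≤ 3/(4*(1+a^2)) := by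
      rw [div_add_div _ _ (by positivity : (a:ℝ)^4 ≠ 0) (by positivity : (a:ℝ)^2 ≠ 0)]
      rw [div_le_div_iff₀ (by positivity) (by positivity)]
      have hp1 : 16*a^2 ≤ a^4 := by nlinarith [h16, sq_nonneg a]
      have hp2 : 16*a^4 ≤ a^6 := by nlinarith [hp1, sq_nonneg a, h16]
      nlinarith [hp1, hp2]
    have hexpo : (R:ℝ)*(1 + Real.log y) ≤ 3*τ/4 := by
      have hc2 : (R:ℝ) + (R:ℝ)*Real.log y ≤ 2*(t:ℝ)/a^4 + (10/27)*((t:ℝ)/a^2) := by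
        linarith [hRbound, hRlogy]
      have hc3 : 2*(t:ℝ)/a^4 + (10/27)*((t:ℝ)/a^2) ≤ 3*τ/4 := by
        have hm := mul_le_mul_of_nonneg_left hkey ht0.le
        rw [hτdef]
        have e1 : (t:ℝ)*(2/a^4 + (10/27)/a^2) = 2*(t:ℝ)/a^4 + (10/27)*((t:ℝ)/a^2) := by
          field_simp
        have e2 : (t:ℝ)*(3/(4*(1+a^2))) = 3*((t:ℝ)/(1+a^2))/4 := by
          field_simp
        rw [e1, e2] at hm
        linarith
      nlinarith [hc2, hc3]
    have hey : Real.exp ((R:ℝ)*(1 + Real.log y)) = (Real.exp 1 * y)^R := by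
      rw [Real.exp_nat_mul]
      congr 1
      rw [Real.exp_add, Real.exp_log hy0]
    have heyle : (Real.exp 1 * y)^R ≤ Real.exp (3*τ/4) := by
      rw [← hey]
      exact Real.exp_le_exp.mpr hexpo
    have hstep2 : (t:ℝ)^R / (((R:ℝ)/Real.exp 1)^R) = ((a^2:ℝ))^R * (Real.exp 1 * y)^R := by
      have hRne : ((R:ℝ)) ≠ 0 := ne_of_gt hRr0
      have heRne : Real.exp 1 ≠ 0 := ne_of_gt (Real.exp_pos 1)
      have hane : (a:ℝ) ≠ 0 := ne_of_gt ha0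
      rw [hydef]
      field_simp
      rw [← mul_pow, ← mul_pow]
      congr 1
      field_simp
    calc (t.choose R : ℝ) ≤ (t:ℝ)^R / (R ! : ℝ) := hchoose
      _ ≤ (t:ℝ)^R / (((R:ℝ)/Real.exp 1)^R) := hstep1
      _ = ((a^2:ℝ))^R * (Real.exp 1 * y)^R := hstep2
      _ ≤ ((a^2:ℝ))^R * Real.exp (3*τ/4) := by
          apply mul_le_mul_of_nonneg_left heyle (by positivity)

lemma main_claim (a : ℝ) (ha : 4 ≤ a) (t K : ℕ) (hK1 : 1 ≤ K) (hKt : K ≤ t) :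
    Real.sqrt t * (a^K * ∑ j ∈ Icc K t, (t.choose j : ℝ) * a^j) ≤ 4*a^2*(1+a^2)^t := by
  have ha0 : (0:ℝ) < a := by linarith
  have ht1 : 1 ≤ t := le_trans hK1 hKt
  have ht0 : (0:ℝ) < (t:ℝ) := by exact_mod_cast ht1
  have h16 : (16:ℝ) ≤ a^2 := by nlinarith
  have hloga : (0:ℝ) < Real.log a := Real.log_pos (by linarith)
  have hsqt0 : (0:ℝ) ≤ Real.sqrt t := Real.sqrt_nonneg _
  have hTnn : (0:ℝ) ≤ ∑ j ∈ Icc K t, (t.choose j : ℝ) * a^j := by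
    apply Finset.sum_nonneg; intro j _; positivity
  by_cases hM1 : (K:ℝ)*(a + 9/10) ≤ a*(t:ℝ)
  · -- Case M1
    have hT : ∑ j ∈ Icc K t, (t.choose j : ℝ) * a^j ≤ (1+a)^t := by
      have hsub : Icc K t ⊆ range (t+1) := by
        intro j hj; rw [mem_Icc] at hj; rw [mem_range]; omega
      have h1 : ∑ j ∈ Icc K t, (t.choose j : ℝ) * a^j ≤
          ∑ j ∈ range (t+1), (t.choose j : ℝ) * a^j := by
        apply Finset.sum_le_sum_of_subset_of_nonneg hsub
        intro j _ _; positivity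
      have h2 : (a+1)^t = ∑ j ∈ range (t+1), a^j * 1^(t-j) * (t.choose j : ℝ) := add_pow a 1 t
      simp only [one_pow, mul_one] at h2
      have h3 : ∑ j ∈ range (t+1), (t.choose j : ℝ) * a^j = (a+1)^t := by
        rw [h2]; apply Finset.sum_congr rfl; intro j _; ring
      rw [h3] at h1
      calc ∑ j ∈ Icc K t, (t.choose j : ℝ) * a^j ≤ (a+1)^t := h1
        _ = (1+a)^t := by ring_nf
    set E : ℝ := (t:ℝ)*Real.log (1+a^2) - (t:ℝ)*Real.log (1+a) - (K:ℝ)*Real.log a with hEdef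
    have hexpE : a^K * (1+a)^t * Real.exp E = (1+a^2)^t := by
      rw [← exp_pow_eq a ha0 K, ← exp_pow_eq (1+a) (by positivity) t,
        ← exp_pow_eq (1+a^2) (by positivity) t, ← Real.exp_add, ← Real.exp_add]
      congr 1
      rw [hEdef]; ring
    have hlogchain : Real.log a - (a-1)/(1+a^2) ≤ Real.log (1+a^2) - Real.log (1+a) := by
      have hy : (0:ℝ) < (a + a^2)/(1+a^2) := by positivity
      have h1 := Real.log_le_sub_one_of_pos hy
      have h2 : Real.log ((a+a^2)/(1+a^2)) = Real.log a + Real.log (1+a) - Real.log (1+a^2) := by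
        rw [Real.log_div (by positivity) (by positivity)]
        rw [show a + a^2 = a*(1+a) from by ring, Real.log_mul (ne_of_gt ha0) (by positivity)]
      rw [h2] at h1
      have h3 : (a+a^2)/(1+a^2) - 1 = (a-1)/(1+a^2) := by
        field_simp
        ring
      rw [h3] at h1
      linarith
    have hKb : (K:ℝ)*Real.log a ≤ (a*(t:ℝ)/(a+9/10))*Real.log a := by
      apply mul_le_mul_of_nonneg_right _ (le_of_lt hloga)
      rw [le_div_iff₀ (by linarith : (0:ℝ) < a+9/10)]
      linarith
    have hid : Real.log a - a*Real.log a/(a+9/10) = (9/10)*Real.log a/(a+9/10) := by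
      field_simp
      ring
    have hEb : (t:ℝ)*((9/10)*Real.log a/(a+9/10) - (a-1)/(1+a^2)) ≤ E := by
      have h5 : (9/10)*Real.log a/(a+9/10) - (a-1)/(1+a^2) ≤
          (Real.log (1+a^2) - Real.log (1+a)) - a*Real.log a/(a+9/10) := by
        rw [← hid]; linarith [hlogchain]
      have h6 := mul_le_mul_of_nonneg_left h5 ht0.le
      rw [hEdef]
      calc (t:ℝ)*((9/10)*Real.log a/(a+9/10) - (a-1)/(1+a^2))
          ≤ (t:ℝ)*((Real.log (1+a^2) - Real.log (1+a)) - a*Real.log a/(a+9/10)) := h6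
        _ = (t:ℝ)*Real.log (1+a^2) - (t:ℝ)*Real.log (1+a) - (a*(t:ℝ)/(a+9/10))*Real.log a := by
            ring
        _ ≤ _ := by linarith [hKb]
    have hlog4 : (1.3862943606:ℝ) ≤ Real.log a := by
      have h1 : Real.log 4 ≤ Real.log a := by
        apply Real.log_le_log (by norm_num) (by linarith)
      have h2 : Real.log 4 = 2 * Real.log 2 := by
        rw [show (4:ℝ) = 2^2 from by norm_num, Real.log_pow]
        norm_num
      have h3 := Real.log_two_gt_d9
      rw [h2] at h1
      linarith
    have hcore : (247/1000)/(a+1) ≤ (9/10)*Real.log a/(a+9/10) - (a-1)/(1+a^2) := by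
      have e1 : (9/10)*Real.log a/(a+1) ≤ (9/10)*Real.log a/(a+9/10) := by
        apply div_le_div_of_nonneg_left (by positivity) (by linarith) (by linarith)
      have e2 : (a-1)/(1+a^2) ≤ 1/(a+1) := by
        rw [div_le_div_iff₀ (by positivity) (by positivity)]
        nlinarith
      have e3 : (247/1000)/(a+1) + 1/(a+1) ≤ (9/10)*Real.log a/(a+1) := by
        rw [← add_div, div_le_div_iff₀ (by linarith) (by linarith)]
        nlinarith
      linarith
    have hE : (247/1000)*(t:ℝ)/(a+1) ≤ E := by
      refine le_trans ?_ hEb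
      rw [div_le_iff₀ (by linarith : (0:ℝ) < a+1)] at hcore ⊢
      calc 247/1000*(t:ℝ) = (t:ℝ)*(247/1000) := by ring
        _ ≤ (t:ℝ)*(((9/10)*Real.log a/(a+9/10) - (a-1)/(1+a^2))*(a+1)) := by
            apply mul_le_mul_of_nonneg_left hcore ht0.le
        _ = (t:ℝ)*((9/10)*Real.log a/(a+9/10) - (a-1)/(1+a^2))*(a+1) := by ring
    have hE' : (247/1000)*(t:ℝ) ≤ E*(a+1) := by
      rw [div_le_iff₀ (by linarith : (0:ℝ) < a+1)] at hE
      linarith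
    have hst : Real.sqrt t ≤ 4*a^2*Real.exp E := by
      by_cases h : Real.sqrt t ≤ 4*a^2
      · have hE0 : 0 ≤ E := by nlinarith
        have : (1:ℝ) ≤ Real.exp E := Real.one_le_exp hE0
        nlinarith
      · push_neg at h
        have hmm : Real.sqrt t * Real.sqrt t = (t:ℝ) := Real.mul_self_sqrt ht0.le
        have hsp : (0:ℝ) < Real.sqrt t := by nlinarith
        have h7 : 4*a^2*Real.sqrt t < (t:ℝ) := by nlinarith
        have hEst : Real.sqrt t ≤ E := by nlinarith
        have h8 := Real.add_one_le_exp E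
        nlinarith [Real.exp_pos E]
    calc Real.sqrt t * (a^K * ∑ j ∈ Icc K t, (t.choose j : ℝ) * a^j)
        ≤ Real.sqrt t * (a^K * (1+a)^t) := by
          apply mul_le_mul_of_nonneg_left _ hsqt0
          apply mul_le_mul_of_nonneg_left hT (by positivity)
      _ ≤ (4*a^2*Real.exp E) * (a^K * (1+a)^t) := by
          apply mul_le_mul_of_nonneg_right hst (by positivity)
      _ = 4*a^2*(a^K * (1+a)^t * Real.exp E) := by ring
      _ = 4*a^2*(1+a^2)^t := by rw [hexpE]
  · -- Case M23
    push_neg at hM1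
    have hgeo : ∑ j ∈ Icc K t, (t.choose j : ℝ) * a^j ≤ 10 * ((t.choose K : ℝ) * a^K) := by
      apply geom_bound (fun j => (t.choose j : ℝ) * a^j) K t hKt
      · intro j; positivity
      · intro j hKj hjt
        have hcast : ((t - j : ℕ) : ℝ) = (t:ℝ) - (j:ℝ) := by
          rw [Nat.cast_sub (le_of_lt hjt)]
        have hratio : a*((t:ℝ)-(j:ℝ)) ≤ (9/10)*((j:ℝ)+1) := by
          have hKj' : (K:ℝ) ≤ (j:ℝ) := by exact_mod_cast hKj
          nlinarith
        have hrec : (t.choose (j+1) : ℝ) * ((j:ℝ)+1) = (t.choose j : ℝ) * ((t:ℝ)-(j:ℝ)) := by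
          have := Nat.choose_succ_right_eq t j
          have hc : ((t.choose (j+1) * (j+1) : ℕ) : ℝ) = ((t.choose j * (t - j) : ℕ) : ℝ) := by
            exact_mod_cast congrArg (Nat.cast (R := ℝ)) this
          push_cast at hc
          rw [← hcast]
          push_cast
          linarith [hc]
        have hj1 : (0:ℝ) < (j:ℝ)+1 := by positivity
        rw [show ∀ x y : ℝ, x ≤ y ↔ x*((j:ℝ)+1) ≤ y*((j:ℝ)+1) from
          fun x y => (mul_le_mul_iff_of_pos_right hj1).symm]
        calc (t.choose (j+1) : ℝ) * a^(j+1) * ((j:ℝ)+1)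
            = ((t.choose (j+1) : ℝ) * ((j:ℝ)+1)) * a^(j+1) := by ring
          _ = ((t.choose j : ℝ) * ((t:ℝ)-(j:ℝ))) * a^(j+1) := by rw [hrec]
          _ = (t.choose j : ℝ) * a^j * (a*((t:ℝ)-(j:ℝ))) := by rw [pow_succ]; ring
          _ ≤ (t.choose j : ℝ) * a^j * ((9/10)*((j:ℝ)+1)) := by
              apply mul_le_mul_of_nonneg_left hratio (by positivity)
          _ = 9/10 * ((t.choose j : ℝ) * a^j) * ((j:ℝ)+1) := by ring
    have hreduce : Real.sqrt t * (a^K * (10 * ((t.choose K : ℝ) * a^K))) =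
        10 * Real.sqrt t * (t.choose K : ℝ) * ((a^K)*(a^K)) := by ring
    have hstep : Real.sqrt t * (a^K * ∑ j ∈ Icc K t, (t.choose j : ℝ) * a^j) ≤
        10 * Real.sqrt t * (t.choose K : ℝ) * ((a^K)*(a^K)) := by
      rw [← hreduce]
      apply mul_le_mul_of_nonneg_left _ hsqt0
      apply mul_le_mul_of_nonneg_left hgeo (by positivity)
    refine le_trans hstep ?_
    -- goal : 10*√t*C(t,K)*(a^K*a^K) ≤ 4a²(1+a²)^t
    by_cases hM2 : 2*(t:ℝ) ≤ a^4*((t:ℝ)-(K:ℝ))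
    · -- M2 : bulk regime, use local CLT bound
      have hKlt : K < t := by
        rcases lt_or_eq_of_le hKt with h | h
        · exact h
        · exfalso; subst h; simp at hM2; nlinarith
      set L : ℕ := t - K with hLdef
      have hL1 : 1 ≤ L := by omega
      have hLr : (L:ℝ) = (t:ℝ) - (K:ℝ) := by
        rw [hLdef]; exact Nat.cast_sub hKt
      have hKL : K + L = t := by omega
      have hlocal := local_sq (a^2) (by positivity) K L hK1 hL1
      rw [hKL] at hlocal
      have hcastKL : (K:ℝ)+(L:ℝ) = (t:ℝ) := by rw [hLr]; ring
      rw [hcastKL] at hlocal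
      have hpowsplit : (a^K)*(a^K) = ((a^2):ℝ)^K := by
        rw [← pow_add, ← pow_mul]
        congr 1
        omega
      rw [hpowsplit]
      apply le_of_sq_le_sq' (by positivity)
      have hsqt : (Real.sqrt t)^2 = (t:ℝ) := Real.sq_sqrt ht0.le
      have h49 : 4*(t:ℝ) < (49/10)*(K:ℝ) := by
        have hnum : 4*(t:ℝ)*(a+9/10) < (49/10)*(K:ℝ)*(a+9/10) := by
          nlinarith [mul_nonneg ht0.le (by linarith : (0:ℝ) ≤ 9/10*a - 18/5)]
        exact lt_of_mul_lt_mul_right hnum (by linarith)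
      have hM2' : 2*(t:ℝ) ≤ a^4*(L:ℝ) := by rw [hLr]; exact hM2
      have hKL25 : 25*(t:ℝ)^2 ≤ 16*a^4*((K:ℝ)*(L:ℝ)) := by
        have hprod : (4*(t:ℝ))*(2*(t:ℝ)) ≤ ((49/10)*(K:ℝ))*(a^4*(L:ℝ)) := by
          apply mul_le_mul (le_of_lt h49) hM2' (by positivity) (by positivity)
        nlinarith [hprod]
      have hexpand : (10*Real.sqrt t*(t.choose K : ℝ)*((a^2:ℝ)^K))^2 =
          100*(t:ℝ)*(((t.choose K : ℝ))^2*(((a^2:ℝ)^K))^2) := by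
        rw [mul_pow, mul_pow, mul_pow, hsqt]; ring
      rw [hexpand]
      have hZ : (0:ℝ) ≤ ((1+a^2)^t)^2 := by positivity
      have hKLpos : (0:ℝ) < 4*((K:ℝ)*(L:ℝ)) := by
        have : (0:ℝ) < (K:ℝ) := by exact_mod_cast hK1
        have : (0:ℝ) < (L:ℝ) := by exact_mod_cast hL1
        positivity
      have hbig : (100*(t:ℝ)*(((t.choose K : ℝ))^2*(((a^2:ℝ)^K))^2)) * (4*((K:ℝ)*(L:ℝ))) ≤
          ((4*a^2*(1+a^2)^t)^2) * (4*((K:ℝ)*(L:ℝ))) := by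
        have h1 : (100*(t:ℝ)) * (4*((K:ℝ)*(L:ℝ)) * (((t.choose K : ℝ))^2*(((a^2:ℝ)^K))^2)) ≤
            (100*(t:ℝ)) * ((t:ℝ) * (((1+a^2)^t)^2)) := by
          apply mul_le_mul_of_nonneg_left _ (by positivity)
          calc 4*((K:ℝ)*(L:ℝ)) * (((t.choose K : ℝ))^2*(((a^2:ℝ)^K))^2)
              = 4*((K:ℝ)*(L:ℝ)) * ((t.choose K : ℝ))^2*(((a^2:ℝ)^K))^2 := by ring
            _ ≤ (t:ℝ) * (((1+a^2)^t)^2) := hlocal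
        have h2 : 100*(t:ℝ)^2 * (((1+a^2)^t)^2) ≤ 64*a^4*((K:ℝ)*(L:ℝ))*(((1+a^2)^t)^2) := by
          nlinarith [mul_le_mul_of_nonneg_right hKL25 hZ]
        nlinarith [h1, h2]
      exact le_of_mul_le_mul_right hbig hKLpos
    · -- M3 : top regime
      push_neg at hM2
      set R : ℕ := t - K with hRdef
      have hRr : (R:ℝ) = (t:ℝ) - (K:ℝ) := by rw [hRdef]; exact Nat.cast_sub hKt
      have hRb : a^4*(R:ℝ) < 2*(t:ℝ) := by rw [hRr]; exact hM2
      have hsym : (t.choose K : ℝ) = (t.choose R : ℝ) := by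
        rw [hRdef, Nat.choose_symm hKt]
      have hKR : K + R = t := by omega
      set τ : ℝ := (t:ℝ)/(1+a^2) with hτdef
      have hτ0 : 0 ≤ τ := by positivity
      -- (1 + a⁻²)^t ≥ exp τ
      have hpowinv : Real.exp τ ≤ (1+(a^2)⁻¹)^t := by
        have hy0 : (0:ℝ) < 1+(a^2)⁻¹ := by positivity
        have hbase : Real.exp (1/(1+a^2)) ≤ 1+(a^2)⁻¹ := by
          have h1 := Real.log_le_sub_one_of_pos (show (0:ℝ) < (1+(a^2)⁻¹)⁻¹ by positivity)
          rw [Real.log_inv] at h1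
          have h2 : (1+(a^2)⁻¹)⁻¹ - 1 = -(1/(1+a^2)) := by
            rw [show (1:ℝ)+(a^2)⁻¹ = (a^2+1)/a^2 from by field_simp]
            rw [inv_div]
            field_simp
            ring
          rw [h2] at h1
          have h3 : 1/(1+a^2) ≤ Real.log (1+(a^2)⁻¹) := by linarith
          calc Real.exp (1/(1+a^2)) ≤ Real.exp (Real.log (1+(a^2)⁻¹)) := Real.exp_le_exp.mpr h3
            _ = 1+(a^2)⁻¹ := Real.exp_log hy0
        calc Real.exp τ = Real.exp ((t:ℝ) * (1/(1+a^2))) := by rw [hτdef]; ring_nf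
          _ = (Real.exp (1/(1+a^2)))^t := Real.exp_nat_mul _ t
          _ ≤ (1+(a^2)⁻¹)^t := pow_le_pow_left₀ (Real.exp_nonneg _) hbase t
      have hF2 : (t.choose R : ℝ) ≤ ((a^2:ℝ))^R * Real.exp (3*τ/4) := by
        rw [hτdef]
        exact choose_tail_bound a ha t R ht0 hRb
      -- combine with helperH
      have hH := helperH a ha t
      have hprod : (10*Real.sqrt t) * (t.choose R : ℝ) ≤
          (4*a^2*Real.exp ((t:ℝ)/(4*(1+a^2)))) * (((a^2:ℝ))^R * Real.exp (3*τ/4)) := by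
        apply mul_le_mul hH hF2 (by positivity) (by positivity)
      have hsplit : Real.exp ((t:ℝ)/(4*(1+a^2))) * Real.exp (3*τ/4) = Real.exp τ := by
        rw [← Real.exp_add]
        congr 1
        rw [hτdef]
        field_simp
        ring
      have hfinal1 : (10*Real.sqrt t) * (t.choose R : ℝ) ≤ 4*a^2*(((a^2:ℝ))^R * (1+(a^2)⁻¹)^t) := by
        calc (10*Real.sqrt t) * (t.choose R : ℝ)
            ≤ (4*a^2*Real.exp ((t:ℝ)/(4*(1+a^2)))) * (((a^2:ℝ))^R * Real.exp (3*τ/4)) := hprod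
          _ = 4*a^2*(((a^2:ℝ))^R * (Real.exp ((t:ℝ)/(4*(1+a^2))) * Real.exp (3*τ/4))) := by ring
          _ = 4*a^2*(((a^2:ℝ))^R * Real.exp τ) := by rw [hsplit]
          _ ≤ 4*a^2*(((a^2:ℝ))^R * (1+(a^2)⁻¹)^t) := by
              apply mul_le_mul_of_nonneg_left _ (by positivity)
              apply mul_le_mul_of_nonneg_left hpowinv (by positivity)
      -- multiply by (a^K * a^K) and rewrite
      have hPnn : (0:ℝ) ≤ a^K * a^K := by positivity
      have hmul := mul_le_mul_of_nonneg_right hfinal1 hPnn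
      have hLHSeq : (10*Real.sqrt t) * (t.choose R : ℝ) * (a^K * a^K) =
          10*Real.sqrt t*(t.choose K : ℝ)*(a^K*a^K) := by rw [hsym]
      have hRHSeq : 4*a^2*(((a^2:ℝ))^R * (1+(a^2)⁻¹)^t) * (a^K * a^K) = 4*a^2*(1+a^2)^t := by
        have h1 : (a^K * a^K : ℝ) = ((a^2:ℝ))^K := by
          rw [← pow_add, ← pow_mul]
          congr 1
          omega
        rw [h1]
        have h2 : ((a^2:ℝ))^R * ((a^2:ℝ))^K = ((a^2:ℝ))^t := by
          rw [← pow_add]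
          congr 1
          omega
        have h3 : ((a^2:ℝ))^t * (1+(a^2)⁻¹)^t = (1+a^2)^t := by
          rw [← mul_pow]
          congr 1
          field_simp
          ring
        calc 4*a^2*(((a^2:ℝ))^R * (1+(a^2)⁻¹)^t) * ((a^2:ℝ))^K
            = 4*a^2*((((a^2:ℝ))^R * ((a^2:ℝ))^K) * (1+(a^2)⁻¹)^t) := by ring
          _ = 4*a^2*(((a^2:ℝ))^t * (1+(a^2)⁻¹)^t) := by rw [h2]
          _ = 4*a^2*(1+a^2)^t := by rw [h3]
      rw [hLHSeq, hRHSeq] at hmul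
      exact hmul

lemma sum_choose_pow (a : ℝ) (t : ℕ) :
    ∑ j ∈ range (t+1), (t.choose j : ℝ) * a^j = (1+a)^t := by
  have h2 : (a+1)^t = ∑ j ∈ range (t+1), a^j * 1^(t-j) * (t.choose j : ℝ) := add_pow a 1 t
  simp only [one_pow, mul_one] at h2
  rw [show (1+a)^t = (a+1)^t from by ring_nf, h2]
  apply Finset.sum_congr rfl; intro j _; ring

lemma key (a σ : ℝ) (ha : 4 ≤ a) (hσ : 1 ≤ σ) (t : ℕ) (ht : 1 ≤ t)
    (x : ℕ → ℝ) (m : ℝ) (hx0 : ∀ j, 0 ≤ x j)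
    (hxc : ∀ j, j ≤ t → x j ≤ (t.choose j : ℝ) * σ)
    (hm : ∑ j ∈ range (t+1), x j = m) :
    ∑ j ∈ range (t+1), a^j * x j ≤
      4*a/((t:ℝ)^((1:ℝ)/4)) * (Real.sqrt (σ*(1+a^2)^t) * Real.sqrt m) := by
  have ha0 : (0:ℝ) < a := by linarith
  have ha1 : (1:ℝ) ≤ a := by linarith
  have ht0 : (0:ℝ) < (t:ℝ) := by exact_mod_cast ht
  set t4 : ℝ := (t:ℝ)^((1:ℝ)/4) with ht4def
  have ht4pos : 0 < t4 := Real.rpow_pos_of_pos ht0 _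
  have hst4 : t4*t4 = Real.sqrt t := by
    rw [ht4def, ← Real.rpow_add ht0, Real.sqrt_eq_rpow]
    norm_num
  set W : ℝ := Real.sqrt (σ*(1+a^2)^t) with hWdef
  have hWpos : 0 < W := Real.sqrt_pos.mpr (by positivity)
  have hW2 : W*W = σ*(1+a^2)^t := Real.mul_self_sqrt (by positivity)
  have hm0 : 0 ≤ m := by
    rw [← hm]; apply Finset.sum_nonneg; intro j _; exact hx0 j
  set sm : ℝ := Real.sqrt m with hsmdef
  have hsm0 : 0 ≤ sm := Real.sqrt_nonneg _
  have hsm2 : sm*sm = m := Real.mul_self_sqrt hm0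
  have hRHS : 4*a/t4 * (W*sm) = 2*(2*a*W*sm/t4) := by
    field_simp
    ring
  -- total sum bound (used in case B)
  have htotal : ∑ j ∈ range (t+1), a^j * x j ≤ σ*(1+a)^t := by
    calc ∑ j ∈ range (t+1), a^j * x j ≤ ∑ j ∈ range (t+1), a^j * ((t.choose j : ℝ)*σ) := by
          apply Finset.sum_le_sum
          intro j hj
          rw [mem_range] at hj
          exact mul_le_mul_of_nonneg_left (hxc j (by omega)) (by positivity)
      _ = σ * ∑ j ∈ range (t+1), (t.choose j : ℝ) * a^j := by
          rw [Finset.mul_sum]; apply Finset.sum_congr rfl; intro j _; ring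
      _ = σ*(1+a)^t := by rw [sum_choose_pow]
  by_cases hPt : 2*a*W < a^t*(t4*sm)
  · by_cases hP0 : 2*a*W < a^0*(t4*sm)
    · -- case B : even k=0 exceeds; m large; use total bound
      simp only [pow_zero, one_mul] at hP0
      -- √t (1+a)^t ≤ 8 a² (1+a²)^t
      have hfact1 : Real.sqrt t * (1+a)^t ≤ 8*a^2*(1+a^2)^t := by
        have h34 : (17/5)*(1+a) ≤ 1+a^2 := by nlinarith
        have hp1 : ((17/5)*(1+a))^t ≤ (1+a^2)^t :=
          pow_le_pow_left₀ (by positivity) h34 t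
        have hp2 : ((17/5):ℝ)^t * (1+a)^t = ((17/5)*(1+a))^t := by rw [mul_pow]
        have hp3 : Real.sqrt t ≤ ((17/5):ℝ)^t := by
          have h1 : Real.sqrt t ≤ (t:ℝ) := by
            have ht1r : (1:ℝ) ≤ (t:ℝ) := by exact_mod_cast ht
            have h0 : (1:ℝ) ≤ Real.sqrt t := by
              rw [show (1:ℝ) = Real.sqrt 1 from Real.sqrt_one.symm]
              exact Real.sqrt_le_sqrt ht1r
            nlinarith [Real.mul_self_sqrt ht0.le]
          have h2 : (t:ℝ) ≤ (2:ℝ)^t := by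
            exact_mod_cast le_of_lt (Nat.lt_two_pow_self (n := t))
          have h3 : ((2:ℝ))^t ≤ ((17/5):ℝ)^t := by
            apply pow_le_pow_left₀ (by norm_num) (by norm_num)
          linarith
        have hp4 : Real.sqrt t * (1+a)^t ≤ ((17/5):ℝ)^t * (1+a)^t := by
          apply mul_le_mul_of_nonneg_right hp3 (by positivity)
        have h8 : (1:ℝ) ≤ 8*a^2 := by nlinarith
        calc Real.sqrt t * (1+a)^t ≤ ((17/5):ℝ)^t * (1+a)^t := hp4
          _ = ((17/5)*(1+a))^t := hp2
          _ ≤ (1+a^2)^t := hp1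
          _ ≤ 8*a^2*(1+a^2)^t := by nlinarith [pow_pos (show (0:ℝ) < 1+a^2 by positivity) t]
      -- σ(1+a)^t ≤ 2·(2aW sm/t4)
      have hsm_gt : 2*a*W/t4 < sm := by
        rw [div_lt_iff₀ ht4pos]
        linarith [hP0]
      have hA : σ*(1+a)^t*(t4*t4) ≤ 8*a^2*(W*W) := by
        rw [hst4, hW2]
        nlinarith [mul_le_mul_of_nonneg_left hfact1 (by linarith : (0:ℝ) ≤ σ)]
      have h8 : σ*(1+a)^t*t4 ≤ 8*a^2*(W*W)/t4 := by
        rw [le_div_iff₀ ht4pos]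
        nlinarith [hA]
      have h9 : 8*a^2*(W*W)/t4 = (4*a*W)*(2*a*W/t4) := by
        field_simp
        ring
      have h10 : (4*a*W)*(2*a*W/t4) ≤ (4*a*W)*sm :=
        mul_le_mul_of_nonneg_left hsm_gt.le (by positivity)
      have hb : σ*(1+a)^t ≤ 2*(2*a*W*sm/t4) := by
        rw [show 2*(2*a*W*sm/t4) = (4*a*W*sm)/t4 from by ring, le_div_iff₀ ht4pos]
        nlinarith [h8, h9, h10]
      linarith [htotal, hb, hRHS.symm.le]
    · -- case C : 1 ≤ threshold
      push_neg at hP0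
      simp only [pow_zero, one_mul] at hP0
      have hex : ∃ k, 2*a*W < a^k*(t4*sm) := ⟨t, hPt⟩
      set K := Nat.find hex with hKdef
      have hPK : 2*a*W < a^K*(t4*sm) := Nat.find_spec hex
      have hKt : K ≤ t := Nat.find_min' hex hPt
      have hK1 : 1 ≤ K := by
        by_contra h
        push_neg at h
        interval_cases K
        · simp at hPK
          linarith
      have hprev : a^(K-1)*(t4*sm) ≤ 2*a*W := by
        have := Nat.find_min hex (show K - 1 < K by omega)
        push_neg at this
        exact this
      have hmpos : 0 < m := by
        rcases eq_or_lt_of_le hm0 with h | h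
        · exfalso
          rw [← h] at hsm2
          have : sm = 0 := by nlinarith
          rw [this] at hPK
          simp at hPK
          nlinarith
        · exact h
      have hsmpos : 0 < sm := Real.sqrt_pos.mpr hmpos
      -- split the sum
      have hsplit : ∑ j ∈ range (t+1), a^j * x j =
          (∑ j ∈ range K, a^j * x j) + ∑ j ∈ Icc K t, a^j * x j := by
        rw [range_eq_Ico, ← Finset.Ico_add_one_right_eq_Icc K t,
          ← Finset.sum_Ico_consecutive _ (Nat.zero_le K) (by omega : K ≤ t+1), range_eq_Ico]
      -- part 1
      have hpart1 : ∑ j ∈ range K, a^j * x j ≤ 2*a*W*sm/t4 := by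
        have h1 : ∑ j ∈ range K, a^j * x j ≤ ∑ j ∈ range K, a^(K-1) * x j := by
          apply Finset.sum_le_sum
          intro j hj
          rw [mem_range] at hj
          exact mul_le_mul_of_nonneg_right
            (pow_le_pow_right₀ ha1 (by omega : j ≤ K-1)) (hx0 j)
        have h2 : ∑ j ∈ range K, a^(K-1) * x j = a^(K-1) * ∑ j ∈ range K, x j := by
          rw [Finset.mul_sum]
        have h3 : ∑ j ∈ range K, x j ≤ m := by
          rw [← hm]
          apply Finset.sum_le_sum_of_subset_of_nonneg
          · intro j hj; rw [mem_range] at *; omega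
          · intro j _ _; exact hx0 j
        have h4 : a^(K-1) * ∑ j ∈ range K, x j ≤ a^(K-1) * m := by
          apply mul_le_mul_of_nonneg_left h3 (by positivity)
        have h5 : a^(K-1) * m * t4 ≤ 2*a*W*sm := by
          calc a^(K-1) * m * t4 = (a^(K-1)*(t4*sm))*sm := by rw [← hsm2]; ring
            _ ≤ (2*a*W)*sm := mul_le_mul_of_nonneg_right hprev hsm0
            _ = 2*a*W*sm := by ring
        have h6 : a^(K-1) * m ≤ 2*a*W*sm/t4 := by
          rw [le_div_iff₀ ht4pos]
          exact h5
        linarith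
      -- part 2
      have hpart2 : ∑ j ∈ Icc K t, a^j * x j ≤ 2*a*W*sm/t4 := by
        have hT : ∑ j ∈ Icc K t, a^j * x j ≤ σ * ∑ j ∈ Icc K t, (t.choose j : ℝ) * a^j := by
          rw [Finset.mul_sum]
          apply Finset.sum_le_sum
          intro j hj
          rw [mem_Icc] at hj
          calc a^j * x j ≤ a^j * ((t.choose j : ℝ)*σ) :=
                mul_le_mul_of_nonneg_left (hxc j hj.2) (by positivity)
            _ = σ * ((t.choose j : ℝ) * a^j) := by ring
        set T : ℝ := ∑ j ∈ Icc K t, (t.choose j : ℝ) * a^j with hTdef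
        have hTnn : 0 ≤ T := by
          rw [hTdef]; apply Finset.sum_nonneg; intro j _; positivity
        have hmc := main_claim a ha t K hK1 hKt
        -- σ T t4 ≤ 2 a W sm
        have hgoal : σ*T*t4 ≤ 2*a*W*sm := by
          have hσTt4 : 0 ≤ σ*T*t4 := by
            have : (0:ℝ) ≤ σ := by linarith
            positivity
          have h1 : (σ*T*t4)*(2*a*W) ≤ (σ*T*t4)*(a^K*(t4*sm)) :=
            mul_le_mul_of_nonneg_left (le_of_lt hPK) hσTt4
          have h2 : (σ*T*t4)*(a^K*(t4*sm)) = (Real.sqrt t * (a^K*T))*(σ*sm) := by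
            rw [← hst4]; ring
          have h3 : (Real.sqrt t * (a^K*T))*(σ*sm) ≤ (4*a^2*(1+a^2)^t)*(σ*sm) := by
            apply mul_le_mul_of_nonneg_right hmc
            have : (0:ℝ) ≤ σ := by linarith
            positivity
          have h4 : (4*a^2*(1+a^2)^t)*(σ*sm) = (2*a*W)*(2*a*W*sm) := by
            rw [show (2*a*W)*(2*a*W*sm) = 4*a^2*(W*W)*sm from by ring, hW2]
            ring
          have h5 : (2*a*W)*(σ*T*t4) ≤ (2*a*W)*(2*a*W*sm) := by
            calc (2*a*W)*(σ*T*t4) = (σ*T*t4)*(2*a*W) := by ring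
              _ ≤ (σ*T*t4)*(a^K*(t4*sm)) := h1
              _ = (Real.sqrt t * (a^K*T))*(σ*sm) := h2
              _ ≤ (4*a^2*(1+a^2)^t)*(σ*sm) := h3
              _ = (2*a*W)*(2*a*W*sm) := h4
          exact le_of_mul_le_mul_left h5 (by positivity)
        have h6 : σ*T ≤ 2*a*W*sm/t4 := by
          rw [le_div_iff₀ ht4pos]
          exact hgoal
        linarith [hT]
      linarith [hsplit.le, hpart1, hpart2, hRHS.symm.le]
  · -- case A : m small, use trivial bound LHS ≤ a^t m
    push_neg at hPt
    have h1 : ∑ j ∈ range (t+1), a^j * x j ≤ ∑ j ∈ range (t+1), a^t * x j := by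
      apply Finset.sum_le_sum
      intro j hj
      rw [mem_range] at hj
      exact mul_le_mul_of_nonneg_right (pow_le_pow_right₀ ha1 (by omega)) (hx0 j)
    have h2 : ∑ j ∈ range (t+1), a^t * x j = a^t * m := by
      rw [← hm, Finset.mul_sum]
    have h3 : a^t * m * t4 ≤ 2*a*W*sm := by
      calc a^t * m * t4 = (a^t*(t4*sm))*sm := by rw [← hsm2]; ring
        _ ≤ (2*a*W)*sm := mul_le_mul_of_nonneg_right hPt hsm0
        _ = 2*a*W*sm := by ring
    have h4 : a^t * m ≤ 2*a*W*sm/t4 := by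
      rw [le_div_iff₀ ht4pos]
      exact h3
    have h5 : (0:ℝ) ≤ 2*a*W*sm/t4 := by positivity
    linarith [hRHS.symm.le]

/-- Lemma 8: for real `λ ≥ 4`, integers `s, t ≥ 1`, `n = (2s)^t`, and `z ∈ ℝⁿ` having
exactly `C(t,j)·s^t` coordinates equal to `λ^j` for each `0 ≤ j ≤ t`, every
`δ ∈ {0,1}ⁿ` satisfies `⟨z,δ⟩ ≤ (4λ/t^{1/4})·‖z‖·‖δ‖`. -/
theorem statement16 (lam : ℝ) (hlam : 4 ≤ lam) (s t : ℕ) (hs : 1 ≤ s) (ht : 1 ≤ t)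
    (n : ℕ) (hn : n = (2 * s) ^ t) (z : EuclideanSpace ℝ (Fin n))
    (hz : ∀ j ≤ t, {i : Fin n | z i = lam ^ j}.ncard = t.choose j * s ^ t)
    (δ : EuclideanSpace ℝ (Fin n)) (hδ : ∀ i, δ i = 0 ∨ δ i = 1) :
    ⟪z, δ⟫ ≤ (4 * lam / (t : ℝ) ^ ((1 : ℝ) / 4)) * (‖z‖ * ‖δ‖) := by
  have ha1 : (1:ℝ) < lam := by linarith
  set A : ℕ → Finset (Fin n) := fun j => univ.filter (fun i => z i = lam^j) with hAdef
  have hcard : ∀ j, j ≤ t → (A j).card = t.choose j * s^t := by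
    intro j hj
    have h1 := hz j hj
    have h2 : {i : Fin n | z i = lam ^ j}.ncard = ({i : Fin n | z i = lam ^ j}).toFinset.card :=
      Set.ncard_eq_toFinset_card' _
    rw [h2] at h1
    rw [hAdef]
    simpa [Set.toFinset_setOf] using h1
  have hpowinj : ∀ j k : ℕ, j ≠ k → lam^j ≠ lam^k := by
    intro j k hjk
    rcases lt_or_gt_of_ne hjk with h | h
    · exact ne_of_lt (pow_lt_pow_right₀ ha1 h)
    · exact ne_of_gt (pow_lt_pow_right₀ ha1 h)
  have hdisj : ∀ j ∈ range (t+1), ∀ k ∈ range (t+1), j ≠ k → Disjoint (A j) (A k) := by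
    intro j _ k _ hjk
    rw [Finset.disjoint_left]
    intro i hij hik
    rw [hAdef] at hij hik
    simp only [mem_filter, mem_univ, true_and] at hij hik
    exact hpowinj j k hjk (by rw [← hij, ← hik])
  have hcover : (univ : Finset (Fin n)) = (range (t+1)).biUnion A := by
    symm
    apply Finset.eq_univ_of_card
    rw [Finset.card_biUnion hdisj]
    have h1 : ∑ j ∈ range (t+1), (A j).card = ∑ j ∈ range (t+1), t.choose j * s^t := by
      apply Finset.sum_congr rfl
      intro j hj
      rw [mem_range] at hj
      exact hcard j (by omega)
    rw [h1, ← Finset.sum_mul, Nat.sum_range_choose]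
    rw [Fintype.card_fin, hn, mul_pow]
  have hmemA : ∀ j, ∀ i ∈ A j, z i = lam^j := by
    intro j i hi
    rw [hAdef] at hi
    simp only [mem_filter, mem_univ, true_and] at hi
    exact hi
  -- sums over the partition
  have hsum_split : ∀ f : Fin n → ℝ, ∑ i, f i = ∑ j ∈ range (t+1), ∑ i ∈ A j, f i := by
    intro f
    rw [show ∑ i, f i = ∑ i ∈ (univ : Finset (Fin n)), f i from rfl, hcover,
      Finset.sum_biUnion hdisj]
  set σ : ℝ := (s:ℝ)^t with hσdef
  have hσ1 : (1:ℝ) ≤ σ := by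
    rw [hσdef]
    apply one_le_pow₀
    exact_mod_cast hs
  have hcardR : ∀ j, j ≤ t → ((A j).card : ℝ) = (t.choose j : ℝ) * σ := by
    intro j hj
    rw [hcard j hj, hσdef]
    push_cast
    ring
  set x : ℕ → ℝ := fun j => ∑ i ∈ A j, δ i with hxdef
  set m : ℝ := ∑ i, δ i with hmdef
  have hδ0 : ∀ i, 0 ≤ δ i := by
    intro i; rcases hδ i with h | h <;> rw [h] <;> norm_num
  have hδ1 : ∀ i, δ i ≤ 1 := by
    intro i; rcases hδ i with h | h <;> rw [h] <;> norm_num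
  have hδsq : ∀ i, δ i ^ 2 = δ i := by
    intro i; rcases hδ i with h | h <;> rw [h] <;> norm_num
  have hx0 : ∀ j, 0 ≤ x j := by
    intro j
    apply Finset.sum_nonneg
    intro i _
    exact hδ0 i
  have hxc : ∀ j, j ≤ t → x j ≤ (t.choose j : ℝ) * σ := by
    intro j hj
    rw [← hcardR j hj, hxdef]
    calc ∑ i ∈ A j, δ i ≤ ∑ i ∈ A j, (1:ℝ) := Finset.sum_le_sum (fun i _ => hδ1 i)
      _ = ((A j).card : ℝ) := by rw [Finset.sum_const]; simp
  have hm : ∑ j ∈ range (t+1), x j = m := by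
    rw [hmdef, hsum_split δ]
  -- inner product
  have hinner : ⟪z, δ⟫ = ∑ j ∈ range (t+1), lam^j * x j := by
    have h1 : ⟪z, δ⟫ = ∑ i, z i * δ i := by
      simp [PiLp.inner_apply, RCLike.inner_apply, conj_trivial]
      exact Finset.sum_congr rfl (fun i _ => mul_comm _ _)
    rw [h1, hsum_split (fun i => z i * δ i)]
    apply Finset.sum_congr rfl
    intro j _
    rw [hxdef, Finset.mul_sum]
    apply Finset.sum_congr rfl
    intro i hi
    rw [hmemA j i hi]
  -- norms
  have hnormz : ‖z‖ = Real.sqrt (σ*(1+lam^2)^t) := by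
    rw [EuclideanSpace.norm_eq]
    congr 1
    have h1 : ∑ i, ‖z i‖^2 = ∑ j ∈ range (t+1), ∑ i ∈ A j, ‖z i‖^2 :=
      hsum_split (fun i => ‖z i‖^2)
    rw [h1]
    have h2 : ∀ j ∈ range (t+1), ∑ i ∈ A j, ‖z i‖^2 = (t.choose j : ℝ) * σ * (lam^2)^j := by
      intro j hj
      rw [mem_range] at hj
      have h3 : ∀ i ∈ A j, ‖z i‖^2 = (lam^2)^j := by
        intro i hi
        rw [Real.norm_eq_abs, sq_abs, hmemA j i hi, ← pow_mul, ← pow_mul, Nat.mul_comm]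
      rw [Finset.sum_congr rfl h3, Finset.sum_const, nsmul_eq_mul, hcardR j (by omega)]
    rw [Finset.sum_congr rfl h2]
    have h4 : ∑ j ∈ range (t+1), (t.choose j : ℝ) * σ * (lam^2)^j
        = σ * ∑ j ∈ range (t+1), (t.choose j : ℝ) * (lam^2)^j := by
      rw [Finset.mul_sum]
      apply Finset.sum_congr rfl
      intro j _
      ring
    rw [h4, sum_choose_pow]
  have hnormδ : ‖δ‖ = Real.sqrt m := by
    rw [EuclideanSpace.norm_eq]
    congr 1
    rw [hmdef]
    apply Finset.sum_congr rfl
    intro i _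
    rw [Real.norm_eq_abs, sq_abs, hδsq i]
  rw [hinner, hnormz, hnormδ]
  exact key lam σ hlam hσ1 t ht x m hx0 hxc hm
end

section
/- Let B be a real m×n matrix with non-negative entries, n ≥ 1. Then there exists a non-zero vector η ∈ {0,1}ⁿ such that ‖Bη‖ ≥ (2/√(log n + 4))·‖B‖·‖η‖, where ‖B‖ denotes the operator norm of B with respect to the Euclidean norms. -/
open intervalIntegral Real

noncomputable def gaux (sK sn : ℝ) : ℝ → ℝ := fun t =>
  if t ≤ 1 / (sK * sn) then sn - (sK / 2) * sn ^ 2 * t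
  else if t ≤ 1 / sK then 1 / (2 * sK * max t (1 / (sK * sn)))
  else 1 - (sK / 2) * t

lemma gaux_key (sK sn : ℝ) (hsK : 2 ≤ sK) (hsn : 1 ≤ sn) (t : ℝ) (ht : 0 ≤ t)
    (y : ℝ) (hy1 : 1 ≤ y) (hyn : y ≤ sn ^ 2) :
    Real.sqrt y ≤ gaux sK sn t + (sK / 2) * t * y := by
  have hsK0 : 0 < sK := by linarith
  have hsn0 : 0 < sn := by linarith
  set sy := Real.sqrt y with hsy
  have hsy1 : 1 ≤ sy := by
    rw [hsy, show (1:ℝ) = Real.sqrt 1 by simp]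
    exact Real.sqrt_le_sqrt hy1
  have hsy2 : sy ^ 2 = y := Real.sq_sqrt (by linarith)
  have hsyn : sy ≤ sn := by
    rw [hsy, show sn = Real.sqrt (sn ^ 2) from (Real.sqrt_sq hsn0.le).symm]
    exact Real.sqrt_le_sqrt hyn
  have hsy0 : 0 < sy := by linarith
  unfold gaux
  split_ifs with h1 h2
  · -- t ≤ 1/(sK*sn)
    have hb : t * (sK * sn) ≤ 1 := (le_div_iff₀ (by positivity)).mp h1
    have hfac : 0 ≤ (sn - sy) * (2 - sK * t * (sn + sy)) := by
      apply mul_nonneg (by linarith)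
      nlinarith [mul_le_mul_of_nonneg_left hsyn (mul_nonneg hsK0.le ht)]
    nlinarith [hfac, hsy2]
  · -- middle region
    have ht1 : 1 / (sK * sn) < t := lt_of_not_ge h1
    have ht0 : 0 < t := lt_trans (by positivity) ht1
    rw [max_eq_left ht1.le]
    have h2s : (0:ℝ) < 2 * sK * t := by positivity
    rw [← mul_le_mul_iff_right₀ h2s]
    have heq : 2 * sK * t * (1 / (2 * sK * t) + sK / 2 * t * y) = 1 + sK ^ 2 * t ^ 2 * y := by
      field_simp
    rw [heq]
    have hmul : sK ^ 2 * t ^ 2 * sy ^ 2 = sK ^ 2 * t ^ 2 * y := by rw [hsy2]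
    nlinarith [sq_nonneg (1 - sK * t * sy), hmul]
  · -- t > 1/sK
    have ht1 : 1 / sK < t := lt_of_not_ge h2
    have hb : 1 ≤ sK * t := by
      rw [div_lt_iff₀ hsK0] at ht1; linarith
    have hfac : 0 ≤ (sy - 1) * (sK * t * (sy + 1) - 2) := by
      apply mul_nonneg (by linarith)
      nlinarith [hb, hsy1, mul_nonneg (mul_nonneg hsK0.le ht) (by linarith : (0:ℝ) ≤ sy - 1)]
    nlinarith [hfac, hsy2]

lemma gaux_cont (sK sn : ℝ) (hsK : 2 ≤ sK) (hsn : 1 ≤ sn) : Continuous (gaux sK sn) := by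
  have hsK0 : 0 < sK := by linarith
  have hsn0 : 0 < sn := by linarith
  have ht10 : (0:ℝ) < 1 / (sK * sn) := by positivity
  have ht1T : 1 / (sK * sn) ≤ 1 / sK := by
    apply div_le_div_of_nonneg_left (by norm_num) hsK0
    nlinarith
  unfold gaux
  apply Continuous.if_le
  · fun_prop
  · apply Continuous.if_le
    · apply Continuous.div continuous_const
      · fun_prop
      · intro x
        have : (0:ℝ) < 2 * sK * max x (1 / (sK * sn)) := by
          have := le_max_right x (1 / (sK * sn))
          nlinarith [lt_of_lt_of_le ht10 (le_max_right x (1 / (sK * sn)))]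
        exact ne_of_gt this
    · fun_prop
    · fun_prop
    · fun_prop
    · intro x hx
      rw [hx, max_eq_left ht1T]
      field_simp
      ring
  · fun_prop
  · fun_prop
  · intro x hx
    rw [hx, if_pos ht1T, max_self]
    field_simp
    ring

lemma gaux_nonneg (sK sn : ℝ) (hsK : 2 ≤ sK) (hsn : 1 ≤ sn) (t : ℝ) (ht : t ≤ 2 / sK) :
    0 ≤ gaux sK sn t := by
  have hsK0 : 0 < sK := by linarith
  have hsn0 : 0 < sn := by linarith
  unfold gaux
  split_ifs with h1 h2
  · have : sK / 2 * sn ^ 2 * t ≤ sK / 2 * sn ^ 2 * (1 / (sK * sn)) := by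
      apply mul_le_mul_of_nonneg_left h1 (by positivity)
    have heq : sK / 2 * sn ^ 2 * (1 / (sK * sn)) = sn / 2 := by field_simp
    nlinarith
  · positivity
  · have hmul := mul_le_mul_of_nonneg_left ht (by positivity : (0:ℝ) ≤ sK / 2)
    have heq : sK / 2 * (2 / sK) = 1 := by field_simp
    linarith

lemma gaux_nonpos (sK sn : ℝ) (hsK : 2 ≤ sK) (hsn : 1 ≤ sn) (t : ℝ) (ht : 2 / sK ≤ t) :
    gaux sK sn t ≤ 0 := by
  have hsK0 : 0 < sK := by linarith
  have hsn0 : 0 < sn := by linarith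
  have h2 : ¬ t ≤ 1 / sK := by
    push_neg
    calc 1 / sK < 2 / sK := by gcongr <;> norm_num
    _ ≤ t := ht
  have h1 : ¬ t ≤ 1 / (sK * sn) := by
    push_neg
    apply lt_of_le_of_lt _ (lt_of_not_ge h2)
    apply div_le_div_of_nonneg_left (by norm_num) hsK0
    nlinarith
  unfold gaux
  rw [if_neg h1, if_neg h2]
  have : sK / 2 * (2 / sK) ≤ sK / 2 * t := by
    apply mul_le_mul_of_nonneg_left ht (by positivity)
  have heq : sK / 2 * (2 / sK) = 1 := by field_simp
  linarith

lemma linint (c d p q : ℝ) :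
    ∫ t in p..q, (c - d * t) = c * (q - p) - d * (q ^ 2 - p ^ 2) / 2 := by
  rw [intervalIntegral.integral_sub intervalIntegrable_const
    ((continuous_mul_left d).intervalIntegrable p q)]
  rw [intervalIntegral.integral_const, intervalIntegral.integral_const_mul,
    integral_id]
  simp [smul_eq_mul]; ring

lemma gaux_integral (sK sn : ℝ) (hsK : 2 ≤ sK) (hsn : 1 ≤ sn) :
    ∫ t in (0:ℝ)..(2 / sK), gaux sK sn t = (2 * Real.log sn + 4) / (4 * sK) := by
  have hsK0 : 0 < sK := by linarith
  have hsn0 : 0 < sn := by linarith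
  set t1 := 1 / (sK * sn) with ht1def
  set T := 1 / sK with hTdef
  have ht10 : 0 < t1 := by positivity
  have ht1T : t1 ≤ T := by
    rw [ht1def, hTdef]
    apply div_le_div_of_nonneg_left (by norm_num) hsK0
    nlinarith
  have hTT' : T ≤ 2 / sK := by
    rw [hTdef, div_le_div_iff₀ hsK0 hsK0]; nlinarith
  have hcont := gaux_cont sK sn hsK hsn
  have hint : ∀ p q : ℝ, IntervalIntegrable (gaux sK sn) MeasureTheory.volume p q :=
    fun p q => hcont.intervalIntegrable p q
  rw [← intervalIntegral.integral_add_adjacent_intervals (hint 0 t1) (hint t1 (2/sK)),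
      ← intervalIntegral.integral_add_adjacent_intervals (hint t1 T) (hint T (2/sK))]
  have I1 : ∫ t in (0:ℝ)..t1, gaux sK sn t = 3 / (4 * sK) := by
    rw [intervalIntegral.integral_congr (g := fun t => sn - (sK / 2 * sn ^ 2) * t) ?_]
    · rw [linint]
      rw [ht1def]; field_simp; ring
    · intro t htmem
      rw [Set.uIcc_of_le ht10.le] at htmem
      unfold gaux
      rw [if_pos htmem.2]
  have I2 : ∫ t in t1..T, gaux sK sn t = Real.log sn / (2 * sK) := by
    rw [intervalIntegral.integral_congr (g := fun t => (1 / (2 * sK)) * (1 / t)) ?_]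
    · rw [intervalIntegral.integral_const_mul, integral_one_div ?_]
      · rw [show T / t1 = sn by rw [ht1def, hTdef]; field_simp]
        ring
      · intro h0
        rw [Set.uIcc_of_le ht1T] at h0
        exact absurd h0.1 (by linarith)
    · intro t htmem
      rw [Set.uIcc_of_le ht1T] at htmem
      unfold gaux
      by_cases h : t ≤ t1
      · have hteq : t = t1 := le_antisymm h htmem.1
        rw [if_pos h, hteq, ht1def]
        field_simp
        ring
      · rw [if_neg h, if_pos htmem.2, max_eq_left (le_of_not_ge h)]
        field_simp
  have I3 : ∫ t in T..(2 / sK), gaux sK sn t = 1 / (4 * sK) := by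
    rw [intervalIntegral.integral_congr (g := fun t => 1 - (sK / 2) * t) ?_]
    · rw [linint]
      rw [hTdef]; field_simp; ring
    · intro t htmem
      rw [Set.uIcc_of_le hTT'] at htmem
      unfold gaux
      by_cases h1 : t ≤ t1
      · have hteq : t = t1 := le_antisymm h1 (le_trans ht1T htmem.1)
        have hT1 : T = t1 := le_antisymm (hteq ▸ htmem.1) ht1T
        have hsn1 : sn = 1 := by
          rw [hTdef, ht1def] at hT1
          field_simp at hT1
          nlinarith
        rw [if_pos h1, hsn1]
        ring
      · rw [if_neg h1]
        by_cases h2 : t ≤ T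
        · have hteq : t = T := le_antisymm h2 htmem.1
          rw [if_pos h2, max_eq_left (le_of_not_ge h1), hteq, hTdef]
          field_simp
          ring
        · rw [if_neg h2]
  rw [I1, I2, I3]
  field_simp
  ring

lemma abel_id (b : ℕ → ℝ) : ∀ N : ℕ,
    ∑ i ∈ Finset.range N, ((i : ℝ) + 1) * (b i ^ 2 - b (i + 1) ^ 2)
      = ∑ i ∈ Finset.range N, b i ^ 2 - N * b N ^ 2 := by
  intro N
  induction N with
  | zero => simp
  | succ N ih =>
    rw [Finset.sum_range_succ, ih, Finset.sum_range_succ (f := fun i => b i ^ 2)]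
    push_cast
    ring

lemma tel_int (f : ℝ → ℝ) (hf : Continuous f) (b : ℕ → ℝ) : ∀ N : ℕ,
    ∑ i ∈ Finset.range N, ∫ t in b (i + 1)..b i, f t = ∫ t in b N..b 0, f t := by
  intro N
  induction N with
  | zero => simp
  | succ N ih =>
    rw [Finset.sum_range_succ, ih, add_comm,
      intervalIntegral.integral_add_adjacent_intervals (hf.intervalIntegrable _ _)
        (hf.intervalIntegrable _ _)]

lemma analytic_main (n : ℕ) (hn : 1 ≤ n) (b : ℕ → ℝ)
    (hmono : ∀ i, b (i + 1) ≤ b i) (hlast : b n = 0)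
    (hsum : ∑ i ∈ Finset.range n, (b i) ^ 2 ≤ 1) :
    ∑ i ∈ Finset.range n, (b i - b (i + 1)) * Real.sqrt (i + 1)
      ≤ Real.sqrt (Real.log n + 4) / 2 := by
  have hlog : 0 ≤ Real.log n := Real.log_nonneg (by exact_mod_cast hn)
  set sn := Real.sqrt n with hsndef
  set sK := Real.sqrt (Real.log n + 4) with hsKdef
  have hsn : 1 ≤ sn := by
    rw [hsndef, show (1:ℝ) = Real.sqrt 1 by simp]
    exact Real.sqrt_le_sqrt (by exact_mod_cast hn)
  have hsK : 2 ≤ sK := by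
    rw [hsKdef, show (2:ℝ) = Real.sqrt 4 by
      rw [show (4:ℝ) = 2^2 by norm_num, Real.sqrt_sq (by norm_num)]]
    exact Real.sqrt_le_sqrt (by linarith)
  have hsK0 : 0 < sK := by linarith
  have hsn2 : sn ^ 2 = n := Real.sq_sqrt (by positivity)
  have hsK2 : sK ^ 2 = Real.log n + 4 := Real.sq_sqrt (by linarith)
  have hlogsn : 2 * Real.log sn = Real.log n := by
    rw [hsndef, Real.log_sqrt (by positivity)]; ring
  have hAnti : Antitone b := antitone_nat_of_succ_le hmono
  have hbnn : ∀ i, i ≤ n → 0 ≤ b i := fun i hi => hlast ▸ hAnti hi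
  -- per-term estimate
  have hterm : ∀ i ∈ Finset.range n,
      (b i - b (i + 1)) * Real.sqrt (i + 1)
        ≤ (∫ t in b (i + 1)..b i, gaux sK sn t)
          + (sK / 4) * (((i : ℝ) + 1) * (b i ^ 2 - b (i + 1) ^ 2)) := by
    intro i hi
    rw [Finset.mem_range] at hi
    have hb1nn : 0 ≤ b (i + 1) := hbnn _ (by omega)
    have hLHS : (b i - b (i + 1)) * Real.sqrt (i + 1)
        - (sK / 4) * (((i : ℝ) + 1) * (b i ^ 2 - b (i + 1) ^ 2))
        = ∫ t in b (i + 1)..b i, (Real.sqrt ((i : ℝ) + 1) - ((sK / 2) * ((i : ℝ) + 1)) * t) := by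
      rw [linint]
      ring
    have hMONO : (∫ t in b (i + 1)..b i,
          (Real.sqrt ((i : ℝ) + 1) - ((sK / 2) * ((i : ℝ) + 1)) * t))
        ≤ ∫ t in b (i + 1)..b i, gaux sK sn t := by
      apply intervalIntegral.integral_mono_on (hmono i)
      · exact ((continuous_const.sub (continuous_const.mul continuous_id')).intervalIntegrable _ _)
      · exact ((gaux_cont sK sn hsK hsn).intervalIntegrable _ _)
      · intro t htmem
        have ht0 : 0 ≤ t := le_trans hb1nn htmem.1
        have := gaux_key sK sn hsK hsn t ht0 ((i : ℝ) + 1)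
          (by push_cast; linarith [Nat.cast_nonneg (α := ℝ) i])
          (by rw [hsn2]; push_cast; exact_mod_cast Nat.succ_le_of_lt hi)
        linarith [this]
    linarith [hLHS ▸ hMONO]
  have hb00 : 0 ≤ b 0 := hbnn 0 (by omega)
  have hcont := gaux_cont sK sn hsK hsn
  have hintval : ∫ t in (0:ℝ)..(2 / sK), gaux sK sn t = sK / 4 := by
    rw [gaux_integral sK sn hsK hsn, hlogsn, ← hsK2]
    field_simp
  have hI0 : (∫ t in (0:ℝ)..(b 0), gaux sK sn t) ≤ sK / 4 := by
    have hsplit : (∫ t in (0:ℝ)..(b 0), gaux sK sn t)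
        = (∫ t in (0:ℝ)..(2 / sK), gaux sK sn t) + ∫ t in (2 / sK)..(b 0), gaux sK sn t :=
      (intervalIntegral.integral_add_adjacent_intervals (hcont.intervalIntegrable _ _)
        (hcont.intervalIntegrable _ _)).symm
    have htail : (∫ t in (2 / sK)..(b 0), gaux sK sn t) ≤ 0 := by
      rcases le_total (b 0) (2 / sK) with h | h
      · rw [intervalIntegral.integral_symm]
        have : 0 ≤ ∫ t in (b 0)..(2 / sK), gaux sK sn t :=
          intervalIntegral.integral_nonneg h fun u hu => gaux_nonneg sK sn hsK hsn u hu.2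
        linarith
      · have : 0 ≤ ∫ t in (2 / sK)..(b 0), -gaux sK sn t :=
          intervalIntegral.integral_nonneg h fun u hu =>
            neg_nonneg.2 (gaux_nonpos sK sn hsK hsn u hu.1)
        rw [intervalIntegral.integral_neg] at this
        linarith
    rw [hsplit, hintval]
    linarith
  calc ∑ i ∈ Finset.range n, (b i - b (i + 1)) * Real.sqrt (i + 1)
      ≤ ∑ i ∈ Finset.range n, ((∫ t in b (i + 1)..b i, gaux sK sn t)
          + (sK / 4) * (((i : ℝ) + 1) * (b i ^ 2 - b (i + 1) ^ 2))) :=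
        Finset.sum_le_sum hterm
    _ = (∑ i ∈ Finset.range n, ∫ t in b (i + 1)..b i, gaux sK sn t)
          + (sK / 4) * ∑ i ∈ Finset.range n, ((i : ℝ) + 1) * (b i ^ 2 - b (i + 1) ^ 2) := by
        rw [Finset.sum_add_distrib, Finset.mul_sum]
    _ = (∫ t in b n..b 0, gaux sK sn t)
          + (sK / 4) * (∑ i ∈ Finset.range n, b i ^ 2 - n * b n ^ 2) := by
        rw [tel_int _ hcont b n, abel_id]
    _ ≤ sK / 4 + (sK / 4) * 1 := by
        apply add_le_add
        · rw [hlast]; exact hI0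
        · apply mul_le_mul_of_nonneg_left _ (by positivity)
          rw [hlast]
          push_cast
          simpa using hsum
    _ ≤ sK / 2 := by linarith

noncomputable def chiv (n : ℕ) (S : Finset (Fin n)) : EuclideanSpace ℝ (Fin n) :=
  WithLp.toLp 2 (fun j => if j ∈ S then (1:ℝ) else 0)

lemma euclid_norm_sq (n : ℕ) (y : EuclideanSpace ℝ (Fin n)) : ‖y‖ ^ 2 = ∑ i, (y i) ^ 2 := by
  rw [EuclideanSpace.norm_eq, Real.sq_sqrt (by positivity)]
  apply Finset.sum_congr rfl
  intro i _
  rw [Real.norm_eq_abs, sq_abs]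

lemma chiv_norm (n : ℕ) (S : Finset (Fin n)) : ‖chiv n S‖ = Real.sqrt S.card := by
  have h : ‖chiv n S‖ ^ 2 = (S.card : ℝ) := by
    rw [euclid_norm_sq]
    have hc : ∀ j, (chiv n S j) ^ 2 = if j ∈ S then (1:ℝ) else 0 := by
      intro j; unfold chiv; split_ifs <;> simp_all
    rw [Finset.sum_congr rfl (fun j _ => hc j), Finset.sum_ite_mem]
    simp
  rw [← h, Real.sqrt_sq (norm_nonneg _)]

lemma core (m n : ℕ) (hn : 1 ≤ n) (B : Matrix (Fin m) (Fin n) ℝ)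
    (c : ℝ) (hc0 : 0 ≤ c)
    (hchi : ∀ S : Finset (Fin n), S.Nonempty →
      ‖Matrix.toEuclideanLin B (chiv n S)‖ ≤ c * Real.sqrt S.card)
    (u : EuclideanSpace ℝ (Fin n)) (hu : ∀ j, 0 ≤ u j) (hu1 : ‖u‖ ≤ 1) :
    ‖Matrix.toEuclideanLin B u‖ ≤ Real.sqrt (Real.log n + 4) / 2 * c := by
  classical
  set T := Matrix.toEuclideanLin B with hT
  set u' : Fin n → ℝ := fun j => u j with hu'
  set σ := Tuple.sort u' with hσ
  set v : Fin n → ℝ := u' ∘ σ with hv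
  have hvmono : Monotone v := Tuple.monotone_sort u'
  set b : ℕ → ℝ := fun i => if h : i < n then v ⟨n - 1 - i, by omega⟩ else 0 with hb
  have hbval : ∀ i (h : i < n), b i = v ⟨n - 1 - i, by omega⟩ := by
    intro i h; rw [hb]; simp [h]
  have hvu : ∀ j : Fin n, v (σ⁻¹ j) = u j := by
    intro j
    rw [hv]
    simp only [Function.comp_apply, Equiv.Perm.inv_def, Equiv.apply_symm_apply]
    rfl
  have hmono : ∀ i, b (i + 1) ≤ b i := by
    intro i
    rw [hb]
    by_cases h1 : i + 1 < n
    · have h2 : i < n := by omega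
      simp only [dif_pos h1, dif_pos h2]
      apply hvmono
      simp only [Fin.mk_le_mk]
      omega
    · by_cases h2 : i < n
      · simp only [dif_neg h1, dif_pos h2]
        exact hu _
      · simp [dif_neg h1, dif_neg h2]
  have hlast : b n = 0 := by rw [hb]; simp
  have hAnti : Antitone b := antitone_nat_of_succ_le hmono
  have huval : ∀ j : Fin n, ∃ k, k < n ∧ b k = u j := by
    intro j
    refine ⟨n - 1 - ((σ⁻¹ j) : Fin n).val, by omega, ?_⟩
    rw [hbval _ (by omega)]
    have hfin : (⟨n - 1 - (n - 1 - ((σ⁻¹ j) : Fin n).val), by omega⟩ : Fin n) = σ⁻¹ j := by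
      apply Fin.ext
      simp only []
      have := (σ⁻¹ j).isLt
      omega
    rw [hfin]
    exact hvu j
  have hb0max : ∀ j : Fin n, u j ≤ b 0 := by
    intro j
    rw [hbval 0 (by omega)]
    rw [← hvu j]
    apply hvmono
    simp only [Fin.le_def]
    have := (σ⁻¹ j).isLt
    omega
  set A : ℕ → Finset (Fin n) := fun i => Finset.univ.filter (fun j => b i ≤ u j) with hA
  -- coordinate identity
  have hcoord : ∀ j : Fin n, u j
      = ∑ i ∈ Finset.range n, (b i - b (i + 1)) * (chiv n (A i) j) := by
    intro j
    have hterm : ∀ i ∈ Finset.range n,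
        (b i - b (i + 1)) * (chiv n (A i) j)
          = min (u j) (b i) - min (u j) (b (i + 1)) := by
      intro i _
      have hmem : chiv n (A i) j = if b i ≤ u j then 1 else 0 := by
        unfold chiv; rw [hA]; simp
      rw [hmem]
      by_cases h : b i ≤ u j
      · rw [if_pos h, min_eq_right h, min_eq_right (le_trans (hmono i) h)]
        ring
      · rw [if_neg h]
        push_neg at h
        have hj : u j ≤ b (i + 1) := by
          obtain ⟨k, hk, hbk⟩ := huval j
          rw [← hbk]
          rw [← hbk] at h
          have hik : i + 1 ≤ k := by
            by_contra hc
            exact absurd (hAnti (by omega : k ≤ i)) (not_le.mpr h)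
          exact hAnti hik
        rw [min_eq_left h.le, min_eq_left hj]
        ring
    rw [Finset.sum_congr rfl hterm, Finset.sum_range_sub' (f := fun i => min (u j) (b i))]
    rw [hlast, min_eq_left (hb0max j), min_eq_right (hu j)]
    ring
  -- vector identity
  have hvec : u = ∑ i ∈ Finset.range n, (b i - b (i + 1)) • chiv n (A i) := by
    ext j
    rw [hcoord j]
    rw [WithLp.ofLp_sum, Finset.sum_apply]
    apply Finset.sum_congr rfl
    intro i _
    simp [PiLp.smul_apply, smul_eq_mul]
  have hTu : T u = ∑ i ∈ Finset.range n, (b i - b (i + 1)) • T (chiv n (A i)) := by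
    rw [hvec, map_sum]
    apply Finset.sum_congr rfl
    intro i _
    rw [map_smul]
  -- norm bound
  have hnormsum : ‖T u‖ ≤ ∑ i ∈ Finset.range n, (b i - b (i + 1)) * ‖T (chiv n (A i))‖ := by
    rw [hTu]
    refine le_trans (norm_sum_le _ _) ?_
    apply Finset.sum_le_sum
    intro i _
    rw [norm_smul, Real.norm_eq_abs, abs_of_nonneg (by linarith [hmono i])]
  have hperterm : ∀ i ∈ Finset.range n,
      (b i - b (i + 1)) * ‖T (chiv n (A i))‖
        ≤ (b i - b (i + 1)) * Real.sqrt (i + 1) * c := by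
    intro i hi
    rw [Finset.mem_range] at hi
    by_cases heq : b i = b (i + 1)
    · rw [heq]; ring_nf; simp
    have hlt : b (i + 1) < b i := lt_of_le_of_ne (hmono i) (Ne.symm heq)
    have hAne : (A i).Nonempty := by
      refine ⟨σ ⟨n - 1 - i, by omega⟩, ?_⟩
      rw [hA]
      simp only [Finset.mem_filter, Finset.mem_univ, true_and]
      rw [hbval i hi]
      exact le_of_eq rfl
    have hcard : (A i).card ≤ i + 1 := by
      have := Finset.card_le_card_of_injOn
        (f := fun j : Fin n => ((σ⁻¹ j) : Fin n).val - (n - 1 - i))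
        (s := A i) (t := Finset.range (i + 1)) ?_ ?_
      · simpa using this
      · intro j hj
        rw [Finset.mem_coe, hA, Finset.mem_filter] at hj
        have hge : n - 1 - i ≤ ((σ⁻¹ j) : Fin n).val := by
          by_contra hcon
          push_neg at hcon
          have hle : ((σ⁻¹ j) : Fin n) ≤ (⟨n - 1 - (i + 1), by omega⟩ : Fin n) := by
            simp only [Fin.le_def]
            omega
          have hub : u j ≤ b (i + 1) := by
            rw [← hvu j, hbval (i + 1) (by omega)]
            exact hvmono hle
          linarith [hj.2]
        dsimp only
        rw [Finset.mem_coe, Finset.mem_range]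
        have := (σ⁻¹ j).isLt
        omega
      · intro j1 hj1 j2 hj2 hf
        have hg : ∀ j ∈ A i, n - 1 - i ≤ ((σ⁻¹ j) : Fin n).val := by
          intro j hj
          rw [hA, Finset.mem_filter] at hj
          by_contra hcon
          push_neg at hcon
          have hle : ((σ⁻¹ j) : Fin n) ≤ (⟨n - 1 - (i + 1), by omega⟩ : Fin n) := by
            simp only [Fin.le_def]; omega
          have hub : u j ≤ b (i + 1) := by
            rw [← hvu j, hbval (i + 1) (by omega)]
            exact hvmono hle
          linarith [hj.2]
        have h1 := hg j1 hj1
        have h2 := hg j2 hj2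
        have : (σ⁻¹ j1 : Fin n) = (σ⁻¹ j2 : Fin n) := by
          apply Fin.ext
          dsimp only at hf
          omega
        have := congrArg σ this
        simpa using this
    calc (b i - b (i + 1)) * ‖T (chiv n (A i))‖
        ≤ (b i - b (i + 1)) * (c * Real.sqrt (A i).card) := by
          apply mul_le_mul_of_nonneg_left (hchi (A i) hAne) (by linarith)
      _ ≤ (b i - b (i + 1)) * (c * Real.sqrt (i + 1)) := by
          apply mul_le_mul_of_nonneg_left _ (by linarith)
          apply mul_le_mul_of_nonneg_left _ hc0
          apply Real.sqrt_le_sqrt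
          exact_mod_cast hcard
      _ = (b i - b (i + 1)) * Real.sqrt (i + 1) * c := by ring
  -- sum of squares
  have hsumsq : ∑ i ∈ Finset.range n, (b i) ^ 2 ≤ 1 := by
    have h1 : ∑ i ∈ Finset.range n, (b i) ^ 2 = ∑ k : Fin n, (v k) ^ 2 := by
      rw [← Fin.sum_univ_eq_sum_range (fun i => (b i) ^ 2) n]
      rw [← Equiv.sum_comp (Fin.revPerm) (fun k : Fin n => (v k) ^ 2)]
      apply Finset.sum_congr rfl
      intro k _
      rw [hbval k.val k.isLt]
      congr 1
      apply congrArg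
      apply Fin.ext
      simp [Fin.revPerm, Fin.rev]
      omega
    have h2 : ∑ k : Fin n, (v k) ^ 2 = ∑ j : Fin n, (u j) ^ 2 := by
      rw [hv]
      exact Equiv.sum_comp σ (fun j => (u' j) ^ 2)
    rw [h1, h2, ← euclid_norm_sq]
    nlinarith [norm_nonneg u]
  -- combine
  calc ‖T u‖ ≤ ∑ i ∈ Finset.range n, (b i - b (i + 1)) * ‖T (chiv n (A i))‖ := hnormsum
    _ ≤ ∑ i ∈ Finset.range n, (b i - b (i + 1)) * Real.sqrt (i + 1) * c :=
        Finset.sum_le_sum hperterm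
    _ = (∑ i ∈ Finset.range n, (b i - b (i + 1)) * Real.sqrt (i + 1)) * c := by
        rw [Finset.sum_mul]
    _ ≤ Real.sqrt (Real.log n + 4) / 2 * c := by
        apply mul_le_mul_of_nonneg_right _ hc0
        exact analytic_main n hn b hmono hlast hsumsq

lemma teq (m n : ℕ) (B : Matrix (Fin m) (Fin n) ℝ) (x : EuclideanSpace ℝ (Fin n)) (i : Fin m) :
    Matrix.toEuclideanLin B x i = ∑ j, B i j * x j := by
  simp [Matrix.toEuclideanLin_apply, Matrix.mulVec, dotProduct]

set_option maxHeartbeats 1000000 in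
/-- For any real `m × n` matrix `B` with non-negative entries there is a non-zero
`η ∈ {0,1}ⁿ` with `‖Bη‖ ≥ (2/√(log n + 4))·‖B‖·‖η‖`, where `‖B‖` is the operator norm
of `B` with respect to the Euclidean norms. -/
theorem statement17 (m n : ℕ) (hn : 1 ≤ n) (B : Matrix (Fin m) (Fin n) ℝ)
    (hB : ∀ i j, 0 ≤ B i j) :
    ∃ η : EuclideanSpace ℝ (Fin n), η ≠ 0 ∧ (∀ j, η j = 0 ∨ η j = 1) ∧
      ‖Matrix.toEuclideanLin B η‖ ≥ (2 / Real.sqrt (Real.log n + 4)) *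
        (‖LinearMap.toContinuousLinearMap (Matrix.toEuclideanLin B)‖ * ‖η‖) := by
  classical
  set T := Matrix.toEuclideanLin B with hT
  set Tc := LinearMap.toContinuousLinearMap T with hTc
  have hlog : 0 ≤ Real.log n := Real.log_nonneg (by exact_mod_cast hn)
  set sK := Real.sqrt (Real.log n + 4) with hsK
  have hsK0 : 0 < sK := Real.sqrt_pos.mpr (by linarith)
  have huniv : (Finset.univ : Finset (Fin n)).Nonempty := ⟨⟨0, by omega⟩, Finset.mem_univ _⟩
  obtain ⟨S₀, hS₀mem, hS₀max⟩ := Finset.exists_max_image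
    (Finset.univ.filter (fun S : Finset (Fin n) => S.Nonempty))
    (fun S => ‖T (chiv n S)‖ / Real.sqrt S.card)
    ⟨Finset.univ, by simp [huniv]⟩
  rw [Finset.mem_filter] at hS₀mem
  have hS₀ne := hS₀mem.2
  set c := ‖T (chiv n S₀)‖ / Real.sqrt S₀.card with hc
  have hc0 : 0 ≤ c := div_nonneg (norm_nonneg _) (Real.sqrt_nonneg _)
  have hcard0 : 0 < Real.sqrt (S₀.card : ℝ) :=
    Real.sqrt_pos.mpr (by exact_mod_cast Finset.card_pos.mpr hS₀ne)
  have hchi : ∀ S : Finset (Fin n), S.Nonempty → ‖T (chiv n S)‖ ≤ c * Real.sqrt S.card := by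
    intro S hS
    have hmax := hS₀max S (by simp [hS])
    have hcardS : 0 < Real.sqrt (S.card : ℝ) :=
      Real.sqrt_pos.mpr (by exact_mod_cast Finset.card_pos.mpr hS)
    calc ‖T (chiv n S)‖ = ‖T (chiv n S)‖ / Real.sqrt S.card * Real.sqrt S.card := by
          field_simp
      _ ≤ c * Real.sqrt S.card := by
          apply mul_le_mul_of_nonneg_right hmax hcardS.le
  -- operator norm bound
  have habs : ∀ x : EuclideanSpace ℝ (Fin n), ‖T x‖ ≤ sK / 2 * c * ‖x‖ := by
    intro x
    by_cases hx : x = 0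
    · simp [hx]
    have hx0 : 0 < ‖x‖ := norm_pos_iff.mpr hx
    set u : EuclideanSpace ℝ (Fin n) := WithLp.toLp 2 (fun j => |x j|) with hu
    have hxu : ‖T x‖ ≤ ‖T u‖ := by
      have hsq : ‖T x‖ ^ 2 ≤ ‖T u‖ ^ 2 := by
        rw [euclid_norm_sq, euclid_norm_sq]
        apply Finset.sum_le_sum
        intro i _
        have h1 : |T x i| ≤ T u i := by
          rw [teq, teq]
          refine le_trans (Finset.abs_sum_le_sum_abs _ _) ?_
          apply Finset.sum_le_sum
          intro j _
          rw [abs_mul, abs_of_nonneg (hB i j)]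
        calc (T x i) ^ 2 = |T x i| ^ 2 := (sq_abs _).symm
          _ ≤ (T u i) ^ 2 := by
              apply pow_le_pow_left₀ (abs_nonneg _) h1
      calc ‖T x‖ = Real.sqrt (‖T x‖ ^ 2) := (Real.sqrt_sq (norm_nonneg _)).symm
        _ ≤ Real.sqrt (‖T u‖ ^ 2) := Real.sqrt_le_sqrt hsq
        _ = ‖T u‖ := Real.sqrt_sq (norm_nonneg _)
    have hnu : ‖u‖ = ‖x‖ := by
      have hsq : ‖u‖ ^ 2 = ‖x‖ ^ 2 := by
        rw [euclid_norm_sq, euclid_norm_sq]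
        apply Finset.sum_congr rfl
        intro j _
        rw [hu]
        exact sq_abs _
      calc ‖u‖ = Real.sqrt (‖u‖ ^ 2) := (Real.sqrt_sq (norm_nonneg _)).symm
        _ = Real.sqrt (‖x‖ ^ 2) := by rw [hsq]
        _ = ‖x‖ := Real.sqrt_sq (norm_nonneg _)
    set w : EuclideanSpace ℝ (Fin n) := ‖x‖⁻¹ • u with hw
    have hw_nn : ∀ j, 0 ≤ w j := by
      intro j
      rw [hw]
      have : (‖x‖⁻¹ • u) j = ‖x‖⁻¹ * u j := rfl
      rw [this]
      exact mul_nonneg (inv_nonneg.mpr hx0.le) (abs_nonneg _)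
    have hw1 : ‖w‖ ≤ 1 := by
      rw [hw, norm_smul, Real.norm_eq_abs, abs_of_nonneg (inv_nonneg.mpr hx0.le), hnu]
      rw [inv_mul_cancel₀ hx0.ne']
    have hcore := core m n hn B c hc0 hchi w hw_nn hw1
    rw [hw, map_smul, norm_smul, Real.norm_eq_abs, abs_of_nonneg (inv_nonneg.mpr hx0.le)]
      at hcore
    have hTu : ‖T u‖ ≤ sK / 2 * c * ‖x‖ := by
      rw [← hsK] at hcore
      calc ‖T u‖ = ‖x‖ * (‖x‖⁻¹ * ‖T u‖) := by field_simp
        _ ≤ ‖x‖ * (sK / 2 * c) := mul_le_mul_of_nonneg_left hcore hx0.le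
        _ = sK / 2 * c * ‖x‖ := by ring
    linarith
  have hop : ‖Tc‖ ≤ sK / 2 * c := by
    apply ContinuousLinearMap.opNorm_le_bound _ (mul_nonneg (by positivity) hc0)
    intro x
    have : Tc x = T x := by rw [hTc, LinearMap.coe_toContinuousLinearMap']
    rw [this]
    exact habs x
  refine ⟨chiv n S₀, ?_, ?_, ?_⟩
  · intro h0
    obtain ⟨j0, hj0⟩ := hS₀ne
    have h1 : chiv n S₀ j0 = 0 := by rw [h0]; rfl
    simp only [chiv, WithLp.ofLp_toLp] at h1
    rw [if_pos hj0] at h1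
    norm_num at h1
  · intro j
    unfold chiv
    by_cases h : j ∈ S₀ <;> simp [h]
  · have hTeta : ‖T (chiv n S₀)‖ = c * ‖chiv n S₀‖ := by
      rw [chiv_norm, hc]
      field_simp
    rw [ge_iff_le, hTeta]
    calc 2 / sK * (‖Tc‖ * ‖chiv n S₀‖)
        ≤ 2 / sK * ((sK / 2 * c) * ‖chiv n S₀‖) := by
          apply mul_le_mul_of_nonneg_left
            (mul_le_mul_of_nonneg_right hop (norm_nonneg _)) (by positivity)
      _ = c * ‖chiv n S₀‖ := by field_simp
end

section
/- Let d be a finite sequence of length n ≥ 1 with non-negative terms, not all zero. Then 1 ≤ ρ(d) ≤ √n, and moreover ρ(d) < √2·‖d‖_∞/‖d‖₂, where ‖d‖_∞ = max_i d_i and ‖d‖₂ = √((1/n)·Σ_{i=1}^{n} d_i²). -/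
open Classical in
lemma rho_spec {n : ℕ} (hn : 0 < n) (d : Fin n → ℝ) (k : ℕ)
    (hk : k = min (sInf {k : ℕ |
        ∑ i : Fin n, (if k < (i : ℕ) then d (Tuple.sort d i.rev) ^ 2 else 0) ≤
        ∑ i : Fin n, (if (i : ℕ) ≤ k then d (Tuple.sort d i.rev) ^ 2 else 0)}) (n - 1))
    (hkn : k < n) :
    rho d = if d (Tuple.sort d (Fin.rev ⟨k, hkn⟩)) ≠ 0 then
      d (Tuple.sort d (Fin.rev ⟨0, hn⟩)) / d (Tuple.sort d (Fin.rev ⟨k, hkn⟩)) else 1 := by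
  subst hk
  rw [rho, dif_pos hn]

/-- Basic bounds on `ρ`: for a non-zero sequence `d` of `n ≥ 1` non-negative terms,
`1 ≤ ρ(d) ≤ √n` and `ρ(d) < √2·‖d‖_∞/‖d‖₂`, where `‖d‖₂ = √((1/n)·Σ dᵢ²)`. -/
theorem statement19 (n : ℕ) (hn : 1 ≤ n) (d : Fin n → ℝ) (hd : ∀ i, 0 ≤ d i)
    (hne : ∃ i, d i ≠ 0) :
    1 ≤ rho d ∧ rho d ≤ Real.sqrt n ∧
      rho d < Real.sqrt 2 *
        ((Finset.univ.sup' (Finset.univ_nonempty_iff.mpr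
            (Fin.pos_iff_nonempty.mp hn)) d) /
          Real.sqrt ((∑ i, d i ^ 2) / (n : ℝ))) := by
  classical
  have hn0 : 0 < n := hn
  set s : Fin n → ℝ := fun i => d (Tuple.sort d i.rev) with hs
  have hs_nonneg : ∀ i, 0 ≤ s i := fun i => hd _
  have hs_anti : ∀ i j : Fin n, i ≤ j → s j ≤ s i := by
    intro i j hij
    exact Tuple.monotone_sort d (Fin.rev_le_rev.mpr hij)
  set A : Set ℕ := {k : ℕ |
      ∑ i : Fin n, (if k < (i : ℕ) then s i ^ 2 else 0) ≤
      ∑ i : Fin n, (if (i : ℕ) ≤ k then s i ^ 2 else 0)} with hA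
  have hA_top : n - 1 ∈ A := by
    have h1 : ∑ i : Fin n, (if n - 1 < (i : ℕ) then s i ^ 2 else 0) = 0 :=
      Finset.sum_eq_zero fun i _ => if_neg (by have := i.isLt; omega)
    have h2 : (0:ℝ) ≤ ∑ i : Fin n, (if (i : ℕ) ≤ n - 1 then s i ^ 2 else 0) :=
      Finset.sum_nonneg fun i _ => by positivity
    simpa [hA, h1] using h2
  set k0 : ℕ := sInf A with hk0
  have hk0_le : k0 ≤ n - 1 := Nat.sInf_le hA_top
  have hk0n : k0 < n := by omega
  set kf : Fin n := ⟨k0, hk0n⟩ with hkf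
  have hk0A : k0 ∈ A := Nat.sInf_mem ⟨n - 1, hA_top⟩
  set S : ℝ := ∑ i : Fin n, s i ^ 2 with hS
  have hS_d : ∑ i, d i ^ 2 = S :=
    (Fintype.sum_equiv (Fin.revPerm.trans (Tuple.sort d)) _ _ (fun i => rfl)).symm
  have hS_pos : 0 < S := by
    rw [← hS_d]
    obtain ⟨i, hi⟩ := hne
    exact Finset.sum_pos' (fun j _ => by positivity) ⟨i, Finset.mem_univ i,
      by positivity⟩
  have hs0_anti : ∀ m : Fin n, s m ≤ s ⟨0, hn0⟩ := fun m =>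
    hs_anti ⟨0, hn0⟩ m (by simp [Fin.le_def])
  -- the two key facts
  have F1 : S < 2 * n * s kf ^ 2 ∧ s ⟨0, hn0⟩ ^ 2 ≤ n * s kf ^ 2 := by
    rcases Nat.eq_zero_or_pos k0 with h0 | h1
    · -- k0 = 0 : s kf = s 0
      have hkf0 : kf = ⟨0, hn0⟩ := by simp [hkf, h0]
      rw [hkf0]
      have hle : S ≤ n * s ⟨0, hn0⟩ ^ 2 := by
        calc S ≤ ∑ _i : Fin n, s ⟨0, hn0⟩ ^ 2 := Finset.sum_le_sum fun i _ =>
              pow_le_pow_left₀ (hs_nonneg i) (hs0_anti i) 2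
          _ = n * s ⟨0, hn0⟩ ^ 2 := by
              simp [Finset.sum_const, nsmul_eq_mul]
      constructor
      · nlinarith
      · nlinarith [sq_nonneg (s ⟨0, hn0⟩), (by exact_mod_cast hn0 : (1:ℝ) ≤ n)]
    · -- k0 ≥ 1
      have hnotA : k0 - 1 ∉ A := Nat.notMem_of_lt_sInf (by omega)
      have hlt : ∑ i : Fin n, (if (i : ℕ) ≤ k0 - 1 then s i ^ 2 else 0) <
          ∑ i : Fin n, (if k0 - 1 < (i : ℕ) then s i ^ 2 else 0) := by
        by_contra hcon
        exact hnotA (not_lt.mp hcon)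
      have hQ : ∑ i : Fin n, (if k0 - 1 < (i : ℕ) then s i ^ 2 else 0) ≤
          n * s kf ^ 2 := by
        calc ∑ i : Fin n, (if k0 - 1 < (i : ℕ) then s i ^ 2 else 0)
            ≤ ∑ _i : Fin n, s kf ^ 2 := by
              apply Finset.sum_le_sum
              intro i _
              split_ifs with h
              · exact pow_le_pow_left₀ (hs_nonneg i)
                  (hs_anti kf i (by simp [hkf, Fin.le_def]; omega)) 2
              · positivity
          _ = n * s kf ^ 2 := by simp [Finset.sum_const, nsmul_eq_mul]
      have hP : s ⟨0, hn0⟩ ^ 2 ≤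
          ∑ i : Fin n, (if (i : ℕ) ≤ k0 - 1 then s i ^ 2 else 0) := by
        have := Finset.single_le_sum
          (f := fun i : Fin n => if (i : ℕ) ≤ k0 - 1 then s i ^ 2 else 0)
          (fun i _ => by positivity) (Finset.mem_univ ⟨0, hn0⟩)
        simpa using this
      have hsplit : (∑ i : Fin n, (if (i : ℕ) ≤ k0 - 1 then s i ^ 2 else 0)) +
          (∑ i : Fin n, (if k0 - 1 < (i : ℕ) then s i ^ 2 else 0)) = S := by
        rw [← Finset.sum_add_distrib]
        refine Finset.sum_congr rfl fun i _ => ?_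
        rcases le_or_gt (i : ℕ) (k0 - 1) with h | h
        · simp [h, not_lt.mpr h]
        · simp [h, not_le.mpr h]
      constructor
      · nlinarith
      · nlinarith
  obtain ⟨F1, F2⟩ := F1
  have hskf_pos : 0 < s kf := by
    rcases lt_or_eq_of_le (hs_nonneg kf) with h | h
    · exact h
    · exfalso; rw [← h] at F1; simp at F1; nlinarith
  have hs0_pos : 0 < s ⟨0, hn0⟩ := lt_of_lt_of_le hskf_pos (hs0_anti kf)
  have hrho : rho d = s ⟨0, hn0⟩ / s kf := by
    rw [rho_spec hn0 d k0 (min_eq_left hk0_le).symm hk0n]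
    rw [if_pos]
    exact ne_of_gt hskf_pos
  have hsup : (Finset.univ.sup' (Finset.univ_nonempty_iff.mpr
      (Fin.pos_iff_nonempty.mp hn)) d) = s ⟨0, hn0⟩ := by
    apply le_antisymm
    · apply Finset.sup'_le
      intro i _
      have : d i = s (((Tuple.sort d).symm i).rev) := by
        simp [hs, Fin.rev_rev]
      rw [this]
      exact hs0_anti _
    · exact Finset.le_sup' d (Finset.mem_univ _)
  refine ⟨?_, ?_, ?_⟩
  · rw [hrho]
    exact (one_le_div hskf_pos).mpr (hs0_anti kf)
  · rw [hrho, div_le_iff₀ hskf_pos]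
    calc s ⟨0, hn0⟩ = Real.sqrt (s ⟨0, hn0⟩ ^ 2) := (Real.sqrt_sq hs0_pos.le).symm
      _ ≤ Real.sqrt (n * s kf ^ 2) := Real.sqrt_le_sqrt F2
      _ = Real.sqrt n * s kf := by
          rw [Real.sqrt_mul (by positivity), Real.sqrt_sq hskf_pos.le]
  · rw [hrho, hsup, hS_d]
    have hnR : (0:ℝ) < n := by exact_mod_cast hn0
    have hSn_pos : 0 < S / n := div_pos hS_pos hnR
    have hsq : Real.sqrt (S / n) < Real.sqrt 2 * s kf := by
      calc Real.sqrt (S / n) < Real.sqrt (2 * s kf ^ 2) := by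
            apply Real.sqrt_lt_sqrt hSn_pos.le
            rw [div_lt_iff₀ (by exact_mod_cast hn0 : (0:ℝ) < n)]
            nlinarith
        _ = Real.sqrt 2 * s kf := by
            rw [Real.sqrt_mul (by norm_num), Real.sqrt_sq hskf_pos.le]
    rw [mul_div_assoc']
    rw [div_lt_div_iff₀ hskf_pos (Real.sqrt_pos.mpr hSn_pos)]
    nlinarith [Real.sqrt_pos.mpr hSn_pos]
end
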